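/- arXiv:1909.11440 — 3 statements merged into one kernel-verified Lean document; each statement's English description precedes it below -/
import Mathlib

section
/- If M(K) is not minimal (i.e., contains a dominated vertex), then K has at least one vertex of degree 1. -/
open Finset

/-- An abstract simplicial complex on vertex type `V`. -/
structure SComplex (V : Type*) where
  faces : Finset V → Prop
  not_empty : ¬ faces ∅
  down_closed : ∀ {σ τ : Finset V}, faces τ → σ ⊆ τ → σ.Nonempty → faces σ

/-- The complex generated by a set of simplices (downward closure). -/
def ofGens {V : Type*} (gens : Set (Finset V)) : SComplex V where
  faces σ := σ.Nonempty ∧ ∃ τ ∈ gens, σ ⊆ τ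
  not_empty h := by simpa using h.1
  down_closed := by
    rintro σ τ ⟨-, τ', hτ', hsub'⟩ hsub hne
    exact ⟨hne, τ', hτ', hsub.trans hsub'⟩

/-- A primitive (gradient) vector field on `K`: a single regular pair `(σ, τ)`
with `σ` a codimension-one face of `τ`. -/
structure VPair {V : Type*} (K : SComplex V) where
  lo : Finset V
  hi : Finset V
  lo_face : K.faces lo
  hi_face : K.faces hi
  lo_sub : lo ⊆ hi
  card_eq : hi.card = lo.card + 1

noncomputable instance {V : Type*} (K : SComplex V) : DecidableEq (VPair K) :=
  Classical.decEq _

/-- Two primitive pairs share no simplex. -/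
def VPair.Compatible {V : Type*} {K : SComplex V} (p q : VPair K) : Prop :=
  p.lo ≠ q.lo ∧ p.lo ≠ q.hi ∧ p.hi ≠ q.lo ∧ p.hi ≠ q.hi

/-- A discrete vector field: each simplex occurs in at most one pair. -/
def IsDVF {V : Type*} {K : SComplex V} (W : Set (VPair K)) : Prop :=
  ∀ p ∈ W, ∀ q ∈ W, p ≠ q → VPair.Compatible p q

/-- Existence of a nontrivial closed `V`-path. -/
def HasClosedPath {V : Type*} {K : SComplex V} (W : Set (VPair K)) : Prop :=
  ∃ k : ℕ, 0 < k ∧ ∃ c : ZMod k → VPair K, (∀ i, c i ∈ W) ∧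
    ∀ i, (c (i + 1)).lo ⊆ (c i).hi ∧ (c (i + 1)).lo ≠ (c i).lo ∧
      (c (i + 1)).lo.card + 1 = (c i).hi.card

/-- A gradient vector field: a discrete vector field with no nontrivial closed path. -/
def IsGVF {V : Type*} {K : SComplex V} (W : Set (VPair K)) : Prop :=
  IsDVF W ∧ ¬ HasClosedPath W

/-- The Morse complex of `K`: vertices are primitive gradient vector fields,
simplices are gradient vector fields. -/
def MorseComplex {V : Type*} (K : SComplex V) : SComplex (VPair K) where
  faces S := S.Nonempty ∧ IsGVF {p | p ∈ S}
  not_empty h := by simpa using h.1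
  down_closed := by
    rintro σ τ ⟨hne', hdvf, hnc⟩ hsub hne
    refine ⟨hne, fun p hp q hq hpq => hdvf p (hsub hp) q (hsub hq) hpq, fun h => hnc ?_⟩
    obtain ⟨k, hk, c, hc, hpath⟩ := h
    exact ⟨k, hk, c, fun i => hsub (hc i), hpath⟩

/-- The pure Morse complex: the subcomplex of `MorseComplex K` generated by the
facets of maximum dimension (maximum gradient vector fields). -/
def pureMorse {V : Type*} (K : SComplex V) : SComplex (VPair K) where
  faces S := (MorseComplex K).faces S ∧ ∃ T : Finset (VPair K), S ⊆ T ∧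
      (MorseComplex K).faces T ∧
      ∀ T' : Finset (VPair K), (MorseComplex K).faces T' → T'.card ≤ T.card
  not_empty h := (MorseComplex K).not_empty h.1
  down_closed := by
    rintro σ τ ⟨hτ, T, hsub', hT, hmax⟩ hsub hne
    exact ⟨(MorseComplex K).down_closed hτ hsub hne, T, hsub.trans hsub', hT, hmax⟩

/-- `σ` is a facet (maximal simplex) of `K`. -/
def IsFacet {V : Type*} (K : SComplex V) (σ : Finset V) : Prop :=
  K.faces σ ∧ ∀ τ, K.faces τ → σ ⊆ τ → σ = τ

/-- `w` dominates `w'`: every facet containing `w'` contains `w`. -/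
def Dominates {V : Type*} (K : SComplex V) (w w' : V) : Prop :=
  ∀ σ, IsFacet K σ → w' ∈ σ → w ∈ σ

/-- `K` is minimal: no vertex dominates another vertex. -/
def MinimalComplex {V : Type*} (K : SComplex V) : Prop :=
  ∀ w w' : V, K.faces {w} → K.faces {w'} → w ≠ w' → ¬ Dominates K w w'

/-- Strong collapsibility of a face predicate: a sequence of removals of
dominated vertices reaching a single point. -/
inductive SCAux {V : Type*} : (Finset V → Prop) → Prop
  | point (F : Finset V → Prop) (v : V) (h : ∀ σ, F σ ↔ σ = {v}) : SCAux F
  | step (F : Finset V → Prop) (w w' : V) (hne : w ≠ w') (hw : F {w}) (hw' : F {w'})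
      (hdom : ∀ σ, (F σ ∧ ∀ τ, F τ → σ ⊆ τ → σ = τ) → w' ∈ σ → w ∈ σ)
      (h : SCAux (fun σ => F σ ∧ w' ∉ σ)) : SCAux F

def StronglyCollapsible {V : Type*} (K : SComplex V) : Prop := SCAux K.faces

/-- `F` strongly collapses to `G` by a sequence of removals of dominated vertices. -/
inductive SCTo {V : Type*} : (Finset V → Prop) → (Finset V → Prop) → Prop
  | refl (F : Finset V → Prop) : SCTo F F
  | step (F G : Finset V → Prop) (w w' : V) (hne : w ≠ w') (hw : F {w}) (hw' : F {w'})
      (hdom : ∀ σ, (F σ ∧ ∀ τ, F τ → σ ⊆ τ → σ = τ) → w' ∈ σ → w ∈ σ)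
      (h : SCTo (fun σ => F σ ∧ w' ∉ σ) G) : SCTo F G

/-- Collapsibility (Forman): removal of free pairs down to a point. -/
inductive CollAux {V : Type*} : (Finset V → Prop) → Prop
  | point (F : Finset V → Prop) (v : V) (h : ∀ σ, F σ ↔ σ = {v}) : CollAux F
  | step (F : Finset V → Prop) (σ τ : Finset V) (hστ : σ ⊂ τ) (hσ : F σ) (hτ : F τ)
      (hfree : ∀ ρ, F ρ → σ ⊂ ρ → ρ = τ)
      (h : CollAux (fun ρ => F ρ ∧ ρ ≠ σ ∧ ρ ≠ τ)) : CollAux F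

def Collapsible {V : Type*} (K : SComplex V) : Prop := CollAux K.faces

/-- The degree of a vertex: the number of edges of `K` containing it. -/
noncomputable def sdeg {V : Type*} (K : SComplex V) (x : V) : ℕ :=
  Set.ncard {σ : Finset V | K.faces σ ∧ σ.card = 2 ∧ x ∈ σ}

/-- Image of a finset, with a classical decidability instance. -/
noncomputable def fimage {V W : Type*} (f : V → W) (σ : Finset V) : Finset W :=
  haveI := Classical.decEq W
  σ.image f

/-- An isomorphism between two simplicial complexes given by face predicates. -/
structure ComplexIso {V W : Type*} (F : Finset V → Prop) (G : Finset W → Prop) where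
  toFun : V → W
  invFun : W → V
  left_inv : ∀ x, F {x} → invFun (toFun x) = x
  right_inv : ∀ y, G {y} → toFun (invFun y) = y
  map_face : ∀ σ, F σ → G (fimage toFun σ)
  inv_face : ∀ τ, G τ → F (fimage invFun τ)

/-- The join of two simplicial complexes. -/
def sJoin {V W : Type*} [DecidableEq V] [DecidableEq W] (K : SComplex V) (L : SComplex W) :
    SComplex (V ⊕ W) :=
  ofGens {σ | ∃ α β, (K.faces α ∨ α = ∅) ∧ (L.faces β ∨ β = ∅) ∧
    σ = α.image Sum.inl ∪ β.image Sum.inr}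

/-- The disjoint union of two simplicial complexes. -/
def sDisjUnion {V W : Type*} [DecidableEq V] [DecidableEq W] (K : SComplex V) (L : SComplex W) :
    SComplex (V ⊕ W) :=
  ofGens ({σ | ∃ α, K.faces α ∧ σ = α.image Sum.inl} ∪
          {σ | ∃ β, L.faces β ∧ σ = β.image Sum.inr})

/-- The simplicial complex of a simple graph (vertices and edges). -/
def graphComplex {V : Type*} [DecidableEq V] (G : SimpleGraph V) : SComplex V :=
  ofGens ({σ | ∃ x, σ = {x}} ∪ {σ | ∃ x y, G.Adj x y ∧ σ = ({x, y} : Finset V)})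

/-- Attach a leaf (pendant edge) to `K` at the vertex `x`. -/
def attachLeaf {V : Type*} [DecidableEq V] (K : SComplex V) (x : V) : SComplex (V ⊕ Unit) :=
  ofGens ({σ | ∃ α, K.faces α ∧ σ = α.image Sum.inl} ∪
          {({Sum.inl x, Sum.inr ()} : Finset (V ⊕ Unit))})

/-- The cycle graph on `ZMod n`. -/
def cycleGraph (n : ℕ) : SimpleGraph (ZMod n) :=
  SimpleGraph.fromRel (fun i j => j = i + 1)

/-- Attach one new leaf to every vertex of a graph. -/
def addLeaves {V : Type*} [DecidableEq V] (G : SimpleGraph V) : SComplex (V ⊕ V) :=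
  ofGens ({σ | ∃ x y, G.Adj x y ∧ σ = ({Sum.inl x, Sum.inl y} : Finset (V ⊕ V))} ∪
          {σ | ∃ u, σ = ({Sum.inl u, Sum.inr u} : Finset (V ⊕ V))})

/-- The geometric realization of `K`, inside `V → ℝ`. -/
def realization {V : Type*} (K : SComplex V) : Set (V → ℝ) :=
  {f | ∃ σ, K.faces σ ∧ (∀ x, 0 ≤ f x) ∧ (∀ x, f x ≠ 0 → x ∈ σ) ∧ ∑ x ∈ σ, f x = 1}

/-- A Hasse-diagram edge of a poset: a covering pair. -/
structure HEdge (P : Type*) [PartialOrder P] where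
  lo : P
  hi : P
  cov : lo ⋖ hi

noncomputable instance {P : Type*} [PartialOrder P] : DecidableEq (HEdge P) :=
  Classical.decEq _

def HEdge.Compat {P : Type*} [PartialOrder P] (p q : HEdge P) : Prop :=
  p.lo ≠ q.lo ∧ p.lo ≠ q.hi ∧ p.hi ≠ q.lo ∧ p.hi ≠ q.hi

def HasPosetCycle {P : Type*} [PartialOrder P] (W : Set (HEdge P)) : Prop :=
  ∃ k : ℕ, 0 < k ∧ ∃ c : ZMod k → HEdge P, (∀ i, c i ∈ W) ∧
    ∀ i, (c (i + 1)).lo ⋖ (c i).hi ∧ (c (i + 1)).lo ≠ (c i).lo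

/-- The generalized Morse complex `f(P)` of a poset: simplices are acyclic
matchings of the Hasse diagram of `P`. -/
def genMorse (P : Type*) [PartialOrder P] : SComplex (HEdge P) where
  faces S := S.Nonempty ∧ (∀ p ∈ S, ∀ q ∈ S, p ≠ q → HEdge.Compat p q) ∧
    ¬ HasPosetCycle {p | p ∈ S}
  not_empty h := by simpa using h.1
  down_closed := by
    rintro σ τ ⟨-, hm, hc⟩ hsub hne
    refine ⟨hne, fun p hp q hq h => hm p (hsub hp) q (hsub hq) h, fun h => hc ?_⟩
    obtain ⟨k, hk, c, hc', hp⟩ := h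
    exact ⟨k, hk, c, fun i => hsub (hc' i), hp⟩

/-- The automorphism group of a simplicial complex, as a subgroup of `Perm V`. -/
def autGroup {V : Type*} [DecidableEq V] (K : SComplex V) : Subgroup (Equiv.Perm V) where
  carrier := {e | ∀ σ : Finset V, K.faces σ ↔ K.faces (σ.image e)}
  one_mem' := by intro σ; simp
  mul_mem' := by
    intro a b ha hb σ
    rw [hb σ, ha (σ.image b)]
    simp [Finset.image_image, Equiv.Perm.coe_mul]
  inv_mem' := by
    intro a ha σ
    have := ha (σ.image ⇑a⁻¹)
    simpa [Finset.image_image, Function.comp_def,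
      Finset.image_id'] using this.symm

/-- The full subcomplex of `K` on a set `S` of vertices. -/
def restrictTo {V : Type*} (K : SComplex V) (S : Set V) : Finset V → Prop :=
  fun σ => K.faces σ ∧ ∀ x ∈ σ, x ∈ S

/-- `S` spans a fully connected subcomplex: `K = (K∣S) * (K∣Sᶜ)`. -/
def FullyConnected {V : Type*} [DecidableEq V] (K : SComplex V) (S : Set V) : Prop :=
  ∀ σ : Finset V, K.faces σ ↔ (σ.Nonempty ∧ ∃ α β : Finset V,
    (restrictTo K S α ∨ α = ∅) ∧ ((K.faces β ∧ ∀ x ∈ β, x ∉ S) ∨ β = ∅) ∧ σ = α ∪ β)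

/-- The primitive pair `(x, xy)` on an edge `{x,y}`. -/
def edgePair {V : Type*} [DecidableEq V] (K : SComplex V) (x y : V) (hxy : x ≠ y)
    (h : K.faces {x, y}) : VPair K where
  lo := {x}
  hi := {x, y}
  lo_face := K.down_closed h (by simp) (Finset.singleton_nonempty x)
  hi_face := h
  lo_sub := by simp
  card_eq := by
    rw [Finset.card_singleton, Finset.card_insert_of_notMem (by simp [hxy]),
      Finset.card_singleton]

section Aux

variable {V : Type*}

lemma face_nonempty (K : SComplex V) {s : Finset V} (h : K.faces s) : s.Nonempty := by
  rcases s.eq_empty_or_nonempty with rfl | h'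
  · exact absurd h K.not_empty
  · exact h'

noncomputable def vpairFintype [Fintype V] (K : SComplex V) : Fintype (VPair K) := by
  classical
  exact Fintype.ofInjective (fun p : VPair K => (p.lo, p.hi))
    (fun p q h => by cases p; cases q; simpa using h)

lemma exists_facet {U : Type*} [Fintype U] (L : SComplex U) (S : Finset U) (hS : L.faces S) :
    ∃ F, IsFacet L F ∧ S ⊆ F := by
  classical
  obtain ⟨F, hF, hmax⟩ := Finset.exists_max_image
    (Finset.univ.filter (fun T => L.faces T ∧ S ⊆ T)) Finset.card ⟨S, by simp [hS]⟩
  simp only [Finset.mem_filter, Finset.mem_univ, true_and] at hF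
  refine ⟨F, ⟨hF.1, ?_⟩, hF.2⟩
  intro τ hτ hsub
  exact Finset.eq_of_subset_of_card_le hsub (hmax τ (by simp [hτ, hF.2.trans hsub]))

lemma singleton_morse_face (K : SComplex V) (p : VPair K) :
    (MorseComplex K).faces {p} := by
  refine ⟨Finset.singleton_nonempty p, fun a ha b hb hab => ?_, ?_⟩
  · simp only [Set.mem_setOf_eq, Finset.mem_singleton] at ha hb
    exact absurd (ha.trans hb.symm) hab
  · rintro ⟨k, hk, c, hmem, hpath⟩
    have h0 : c 0 = p := by simpa using hmem 0
    have h1 : c (0 + 1) = p := by simpa using hmem (0 + 1)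
    exact (hpath 0).2.1 (by rw [h0, h1])

lemma two_elt_no_path {K : SComplex V} (p' q : VPair K) (hne : p' ≠ q)
    (hnocyc : ¬ (p'.lo ⊆ q.hi ∧ p'.lo.card + 1 = q.hi.card ∧
      q.lo ⊆ p'.hi ∧ q.lo.card + 1 = p'.hi.card)) :
    ¬ HasClosedPath {r | r ∈ ({p', q} : Finset (VPair K))} := by
  rintro ⟨k, hk, c, hmem, hpath⟩
  have hmem' : ∀ i, c i = p' ∨ c i = q := by
    intro i
    have := hmem i
    simpa using this
  have hstep : ∀ i, c (i + 1) ≠ c i := fun i h => (hpath i).2.1 (by rw [h])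
  have hq : ∃ i, c i = q := by
    by_contra hno
    push_neg at hno
    have hall : ∀ i, c i = p' := fun i => (hmem' i).resolve_right (hno i)
    exact hstep 0 ((hall (0 + 1)).trans (hall 0).symm)
  have hp' : ∃ i, c i = p' := by
    by_contra hno
    push_neg at hno
    have hall : ∀ i, c i = q := fun i => (hmem' i).resolve_left (hno i)
    exact hstep 0 ((hall (0 + 1)).trans (hall 0).symm)
  obtain ⟨i, hi⟩ := hq
  obtain ⟨j, hj⟩ := hp'
  have hi1 : c (i + 1) = p' := by
    rcases hmem' (i + 1) with h | h
    · exact h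
    · exact absurd (h.trans hi.symm) (hstep i)
  have hj1 : c (j + 1) = q := by
    rcases hmem' (j + 1) with h | h
    · exact absurd (h.trans hj.symm) (hstep j)
    · exact h
  have H1 := hpath i
  have H2 := hpath j
  rw [hi, hi1] at H1
  rw [hj, hj1] at H2
  exact hnocyc ⟨H1.1, H1.2.2, H2.1, H2.2.2⟩

lemma compat_symm {K : SComplex V} {p q : VPair K} (h : VPair.Compatible p q) :
    VPair.Compatible q p :=
  ⟨h.1.symm, h.2.2.1.symm, h.2.1.symm, h.2.2.2.symm⟩

lemma key_lemma [Fintype V] (K : SComplex V) {p p' q : VPair K}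
    (hdom : Dominates (MorseComplex K) p p')
    (hqp : q ≠ p) (hshare : ¬ VPair.Compatible p q)
    (hqp' : q ≠ p') (hc : VPair.Compatible p' q)
    (hnocyc : ¬ (p'.lo ⊆ q.hi ∧ p'.lo.card + 1 = q.hi.card ∧
      q.lo ⊆ p'.hi ∧ q.lo.card + 1 = p'.hi.card)) : False := by
  classical
  haveI : Fintype (VPair K) := vpairFintype K
  have hface : (MorseComplex K).faces {p', q} := by
    refine ⟨⟨p', by simp⟩, fun a ha b hb hab => ?_, two_elt_no_path p' q (Ne.symm hqp') hnocyc⟩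
    simp only [Set.mem_setOf_eq, Finset.mem_insert, Finset.mem_singleton] at ha hb
    rcases ha with rfl | rfl <;> rcases hb with rfl | rfl
    · exact absurd rfl hab
    · exact hc
    · exact compat_symm hc
    · exact absurd rfl hab
  obtain ⟨F, hF, hsub⟩ := exists_facet (MorseComplex K) {p', q} hface
  have hp'F : p' ∈ F := hsub (by simp)
  have hqF : q ∈ F := hsub (by simp)
  have hpF : p ∈ F := hdom F hF hp'F
  exact hshare (hF.1.2.1 p hpF q hqF (Ne.symm hqp))

end Aux

lemma no_dom {V : Type*} [Fintype V] (K : SComplex V)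
    (hdeg : ∀ x : V, K.faces {x} → sdeg K x ≠ 1)
    (p p' : VPair K) (hne : p ≠ p')
    (hdom : Dominates (MorseComplex K) p p') : False := by
  classical
  haveI : Fintype (VPair K) := vpairFintype K
  -- Step 1: p and p' are compatible
  have hpp' : VPair.Compatible p p' := by
    by_contra hnc
    obtain ⟨F, hF, hsub⟩ := exists_facet (MorseComplex K) {p'} (singleton_morse_face K p')
    have hp'F : p' ∈ F := hsub (Finset.mem_singleton_self p')
    have hpF : p ∈ F := hdom F hF hp'F
    exact hnc (hF.1.2.1 p hpF p' hp'F hne)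
  have hcard := p.card_eq
  have hcard' := p'.card_eq
  have hσne : p.lo.Nonempty := face_nonempty K p.lo_face
  have hσ'ne : p'.lo.Nonempty := face_nonempty K p'.lo_face
  by_cases h2 : 2 ≤ p.lo.card
  · -- Case A : dim σ ≥ 1, take a facet ν of σ avoiding σ', τ'
    obtain ⟨a, ha, b, hb, hab⟩ := Finset.one_lt_card.mp h2
    have hne_e : p.lo.erase a ≠ p.lo.erase b := by
      intro hEq
      have hbmem : b ∈ p.lo.erase a := Finset.mem_erase.mpr ⟨hab.symm, hb⟩
      rw [hEq] at hbmem
      exact Finset.notMem_erase b p.lo hbmem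
    obtain ⟨ν, hν1, hν2, hν3, hν4⟩ :
        ∃ ν, ν ⊆ p.lo ∧ ν.card + 1 = p.lo.card ∧ ν ≠ p'.lo ∧ ν ≠ p'.hi := by
      by_cases hA : p.lo.erase a = p'.lo ∨ p.lo.erase a = p'.hi
      · refine ⟨p.lo.erase b, Finset.erase_subset _ _,
          by rw [Finset.card_erase_of_mem hb]; omega, ?_, ?_⟩
        · rcases hA with hh | hh
          · rw [← hh]; exact hne_e.symm
          · intro hcontra
            have e1 : (p.lo.erase b).card = p'.lo.card := by rw [hcontra]
            have e2 : (p.lo.erase a).card = p'.hi.card := by rw [hh]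
            rw [Finset.card_erase_of_mem hb] at e1
            rw [Finset.card_erase_of_mem ha] at e2
            omega
        · rcases hA with hh | hh
          · intro hcontra
            have e1 : (p.lo.erase b).card = p'.hi.card := by rw [hcontra]
            have e2 : (p.lo.erase a).card = p'.lo.card := by rw [hh]
            rw [Finset.card_erase_of_mem hb] at e1
            rw [Finset.card_erase_of_mem ha] at e2
            omega
          · rw [← hh]; exact hne_e.symm
      · push_neg at hA
        exact ⟨p.lo.erase a, Finset.erase_subset _ _,
          by rw [Finset.card_erase_of_mem ha]; omega, hA.1, hA.2⟩
    have hνne : ν.Nonempty := Finset.card_pos.mp (by omega)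
    refine key_lemma K (q := ⟨ν, p.lo, K.down_closed p.lo_face hν1 hνne, p.lo_face,
      hν1, hν2.symm⟩) hdom ?_ ?_ ?_ ?_ ?_
    · intro hEq
      have := congrArg (fun r : VPair K => r.hi.card) hEq
      simp only at this
      omega
    · intro hcpt
      exact hcpt.2.1 rfl
    · intro hEq
      exact hν3 (congrArg VPair.lo hEq)
    · exact ⟨fun hh => hν3 hh.symm, fun hh => hpp'.1 hh.symm,
        fun hh => hν4 hh.symm, fun hh => hpp'.2.1 hh.symm⟩
    · rintro ⟨h1, hc2, h3, hc4⟩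
      simp only at h1 hc2 h3 hc4
      -- h1 : p'.lo ⊆ p.lo, h3 : ν ⊆ p'.hi
      have hint_ne : p.lo ∩ p'.hi ≠ p.lo := by
        intro hEq
        have hsub2 : p.lo ⊆ p'.hi := by
          rw [← hEq]; exact Finset.inter_subset_right
        exact hpp'.2.1 (Finset.eq_of_subset_of_card_le hsub2 (by omega))
      have hint_lt : (p.lo ∩ p'.hi).card < p.lo.card :=
        Finset.card_lt_card (HasSubset.Subset.ssubset_of_ne Finset.inter_subset_left hint_ne)
      have hs1 : p'.lo ⊆ p.lo ∩ p'.hi := Finset.subset_inter h1 p'.lo_sub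
      have hs2 : ν ⊆ p.lo ∩ p'.hi := Finset.subset_inter hν1 h3
      have hle1 := Finset.card_le_card hs1
      have hle2 := Finset.card_le_card hs2
      have hEq1 : p'.lo = p.lo ∩ p'.hi :=
        Finset.eq_of_subset_of_card_le hs1 (by omega)
      have hEq2 : ν = p.lo ∩ p'.hi :=
        Finset.eq_of_subset_of_card_le hs2 (by omega)
      exact hν3 (hEq2.trans hEq1.symm)
  · -- Case B : σ = {x}
    have h1c : p.lo.card = 1 := by
      have := hσne.card_pos
      omega
    obtain ⟨x, hx⟩ := Finset.card_eq_one.mp h1c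
    have hxτ : x ∈ p.hi := p.lo_sub (hx ▸ Finset.mem_singleton_self x)
    have hcard2 : p.hi.card = 2 := by omega
    have hey : (p.hi.erase x).card = 1 := by
      rw [Finset.card_erase_of_mem hxτ]; omega
    obtain ⟨y, hy⟩ := Finset.card_eq_one.mp hey
    have hymem : y ∈ p.hi.erase x := hy ▸ Finset.mem_singleton_self y
    have hyx : y ≠ x := (Finset.mem_erase.mp hymem).1
    have hyτ : y ∈ p.hi := (Finset.mem_erase.mp hymem).2
    have hτxy : p.hi = {x, y} := by
      rw [← Finset.insert_erase hxτ, hy]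
    have hfy : K.faces {y} :=
      K.down_closed p.hi_face (Finset.singleton_subset_iff.mpr hyτ)
        (Finset.singleton_nonempty y)
    by_cases hσ'y : p'.lo = {y}
    · -- need another edge at x
      have hfx : K.faces {x} := hx ▸ p.lo_face
      have hτS : p.hi ∈ {σ : Finset V | K.faces σ ∧ σ.card = 2 ∧ x ∈ σ} :=
        ⟨p.hi_face, hcard2, hxτ⟩
      obtain ⟨e, heS, heτ⟩ :
          ∃ e ∈ {σ : Finset V | K.faces σ ∧ σ.card = 2 ∧ x ∈ σ}, e ≠ p.hi := by
        by_contra hno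
        push_neg at hno
        apply hdeg x hfx
        have hSeq : {σ : Finset V | K.faces σ ∧ σ.card = 2 ∧ x ∈ σ} = {p.hi} :=
          Set.eq_singleton_iff_unique_mem.mpr ⟨hτS, hno⟩
        unfold sdeg
        rw [hSeq, Set.ncard_singleton]
      have he2 : e.card = 2 := heS.2.1
      have hye : y ∉ e := by
        intro hye
        apply heτ
        have hsub2 : p.hi ⊆ e := by
          rw [hτxy]
          exact Finset.insert_subset heS.2.2 (Finset.singleton_subset_iff.mpr hye)
        exact (Finset.eq_of_subset_of_card_le hsub2 (by omega)).symm
      refine key_lemma K (q := ⟨{x}, e, hfx, heS.1,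
        Finset.singleton_subset_iff.mpr heS.2.2, by simp [heS.2.1]⟩) hdom ?_ ?_ ?_ ?_ ?_
      · intro hEq
        exact heτ (congrArg VPair.hi hEq)
      · intro hcpt
        exact hcpt.1 (by rw [hx])
      · intro hEq
        have := congrArg VPair.lo hEq
        simp only [hσ'y] at this
        exact hyx (Finset.singleton_injective this.symm)
      · refine ⟨?_, ?_, ?_, ?_⟩
        · rw [hσ'y]
          intro hh
          exact hyx (Finset.singleton_injective hh)
        · intro hh
          have : p'.lo.card = e.card := by rw [hh]
          rw [hσ'y] at this
          simp [heS.2.1] at this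
        · intro hh
          have hh' : p'.hi = {x} := hh
          have hA : p'.hi.card = 1 := by rw [hh']; simp
          have hB : p'.lo.card = 1 := by rw [hσ'y]; simp
          omega
        · intro hh
          have hh' : p'.hi = e := hh
          exact hye (hh' ▸ p'.lo_sub (hσ'y ▸ Finset.mem_singleton_self y))
      · rintro ⟨hh1, -, -, -⟩
        simp only at hh1
        exact hye (hh1 (by rw [hσ'y]; exact Finset.mem_singleton_self y))
    · -- q = ({y}, τ)
      refine key_lemma K (q := ⟨{y}, p.hi, hfy, p.hi_face,
        Finset.singleton_subset_iff.mpr hyτ, by rw [Finset.card_singleton]; omega⟩) hdom ?_ ?_ ?_ ?_ ?_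
      · intro hEq
        have := congrArg VPair.lo hEq
        simp only [hx] at this
        exact hyx (Finset.singleton_injective this)
      · intro hcpt
        exact hcpt.2.2.2 rfl
      · intro hEq
        exact hσ'y ((congrArg VPair.lo hEq)).symm
      · refine ⟨fun hh => hσ'y hh, fun hh => hpp'.2.2.1 hh.symm, ?_,
          fun hh => hpp'.2.2.2 hh.symm⟩
        intro hh
        have hh' : p'.hi = {y} := hh
        have hA : p'.hi.card = 1 := by rw [hh']; simp
        have hB := hσ'ne.card_pos
        omega
      · rintro ⟨hh1, hh2, -, -⟩
        simp only at hh1 hh2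
        have hc1 : p'.lo.card = 1 := by omega
        obtain ⟨v, hv⟩ := Finset.card_eq_one.mp hc1
        have hvmem : v ∈ p.hi := hh1 (hv ▸ Finset.mem_singleton_self v)
        rw [hτxy] at hvmem
        simp only [Finset.mem_insert, Finset.mem_singleton] at hvmem
        rcases hvmem with rfl | rfl
        · exact hpp'.1 (hx.trans hv.symm)
        · exact hσ'y hv

/-- if `M(K)` is not minimal, then `K` has a vertex of degree 1. -/
theorem stmt_2 {V : Type*} [Fintype V] (K : SComplex V)
    (h : ¬ MinimalComplex (MorseComplex K)) :
    ∃ x : V, K.faces {x} ∧ sdeg K x = 1 := by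
  by_contra hcon
  push_neg at hcon
  apply h
  intro w w' hw hw' hne hdom
  exact no_dom K (fun x hx => hcon x hx) w w' hne hdom
end

section
/- If K and L are disjoint simplicial complexes each having at least one edge, then the Morse complex of the disjoint union K ⊔ L equals the join M(K) * M(L) of the Morse complexes. -/
open Finset

section Stmt8Aux

lemma faces_nonempty' {V : Type*} (K : SComplex V) {σ : Finset V} (h : K.faces σ) :
    σ.Nonempty := by
  rcases σ.eq_empty_or_nonempty with rfl | h'
  · exact absurd h K.not_empty
  · exact h'

lemma VPair.ext' {V : Type*} {K : SComplex V} {p q : VPair K}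
    (h1 : p.lo = q.lo) (h2 : p.hi = q.hi) : p = q := by
  cases p; cases q; simp_all

lemma VPair.Compatible.symm' {V : Type*} {K : SComplex V} {p q : VPair K}
    (h : VPair.Compatible p q) : VPair.Compatible q p :=
  ⟨h.1.symm, h.2.2.1.symm, h.2.1.symm, h.2.2.2.symm⟩

lemma toLeft_image_inl {V W : Type*} [DecidableEq V] [DecidableEq W] (α : Finset V) :
    ((α.image Sum.inl : Finset (V ⊕ W))).toLeft = α := by
  ext x; simp

lemma toRight_image_inr {V W : Type*} [DecidableEq V] [DecidableEq W] (β : Finset W) :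
    ((β.image Sum.inr : Finset (V ⊕ W))).toRight = β := by
  ext x; simp

lemma eq_toLeft_union_toRight {V W : Type*} [DecidableEq V] [DecidableEq W] (u : Finset (V ⊕ W)) :
    u = u.toLeft.image Sum.inl ∪ u.toRight.image Sum.inr := by
  ext x; cases x <;> simp

lemma image_inl_ne_image_inr' {V W : Type*} [DecidableEq V] [DecidableEq W] {α : Finset V} {β : Finset W}
    (h : α.Nonempty) : α.image Sum.inl ≠ β.image Sum.inr := by
  obtain ⟨x, hx⟩ := h
  intro he
  have : (Sum.inl x : V ⊕ W) ∈ β.image Sum.inr := he ▸ Finset.mem_image_of_mem _ hx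
  simp at this

variable {V W : Type*} [DecidableEq V] [DecidableEq W] (K : SComplex V) (L : SComplex W)

lemma disjUnion_faces_iff (σ : Finset (V ⊕ W)) :
    (sDisjUnion K L).faces σ ↔
      (∃ α, K.faces α ∧ σ = α.image Sum.inl) ∨ (∃ β, L.faces β ∧ σ = β.image Sum.inr) := by
  constructor
  · rintro ⟨hne, τ, (⟨α, hα, rfl⟩ | ⟨β, hβ, rfl⟩), hsub⟩
    · obtain ⟨α', hα', rfl⟩ := Finset.subset_image_iff.mp hsub
      exact Or.inl ⟨α', K.down_closed hα hα' (Finset.image_nonempty.mp hne), rfl⟩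
    · obtain ⟨β', hβ', rfl⟩ := Finset.subset_image_iff.mp hsub
      exact Or.inr ⟨β', L.down_closed hβ hβ' (Finset.image_nonempty.mp hne), rfl⟩
  · rintro (⟨α, hα, rfl⟩ | ⟨β, hβ, rfl⟩)
    · exact ⟨Finset.image_nonempty.mpr (faces_nonempty' K hα), _,
        Or.inl ⟨α, hα, rfl⟩, Finset.Subset.refl _⟩
    · exact ⟨Finset.image_nonempty.mpr (faces_nonempty' L hβ), _,
        Or.inr ⟨β, hβ, rfl⟩, Finset.Subset.refl _⟩

lemma join_faces_iff (T : Finset (V ⊕ W)) :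
    (sJoin K L).faces T ↔ T.Nonempty ∧ (K.faces T.toLeft ∨ T.toLeft = ∅) ∧
      (L.faces T.toRight ∨ T.toRight = ∅) := by
  constructor
  · rintro ⟨hne, τ, ⟨α, β, hα, hβ, rfl⟩, hsub⟩
    refine ⟨hne, ?_, ?_⟩
    · rcases T.toLeft.eq_empty_or_nonempty with he | hne'
      · exact Or.inr he
      · have h1 : T.toLeft ⊆ α := by
          intro x hx
          have hmem := hsub (Finset.mem_toLeft.mp hx)
          simp only [Finset.mem_union, Finset.mem_image] at hmem
          rcases hmem with ⟨a, ha, hax⟩ | ⟨b, _, hbx⟩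
          · exact (Sum.inl_injective hax) ▸ ha
          · exact absurd hbx (by simp)
        rcases hα with hα | rfl
        · exact Or.inl (K.down_closed hα h1 hne')
        · exact absurd (h1 hne'.choose_spec) (by simp)
    · rcases T.toRight.eq_empty_or_nonempty with he | hne'
      · exact Or.inr he
      · have h1 : T.toRight ⊆ β := by
          intro x hx
          have hmem := hsub (Finset.mem_toRight.mp hx)
          simp only [Finset.mem_union, Finset.mem_image] at hmem
          rcases hmem with ⟨a, _, hax⟩ | ⟨b, hb, hbx⟩
          · exact absurd hax (by simp)
          · exact (Sum.inr_injective hbx) ▸ hb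
        rcases hβ with hβ | rfl
        · exact Or.inl (L.down_closed hβ h1 hne')
        · exact absurd (h1 hne'.choose_spec) (by simp)
  · rintro ⟨hne, hA, hB⟩
    exact ⟨hne, _, ⟨T.toLeft, T.toRight, hA, hB, rfl⟩,
      le_of_eq (eq_toLeft_union_toRight T)⟩

/-- side dichotomy for a primitive pair on a disjoint union -/
lemma pair_sides (p : VPair (sDisjUnion K L)) :
    (∃ α α', K.faces α ∧ K.faces α' ∧ p.lo = α.image Sum.inl ∧ p.hi = α'.image Sum.inl)
    ∨ (∃ β β', L.faces β ∧ L.faces β' ∧ p.lo = β.image Sum.inr ∧ p.hi = β'.image Sum.inr) := by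
  rcases (disjUnion_faces_iff K L _).mp p.hi_face with ⟨α', hα', hh⟩ | ⟨β', hβ', hh⟩
  · left
    have hsub := p.lo_sub
    rw [hh] at hsub
    obtain ⟨α, hαsub, hα⟩ := Finset.subset_image_iff.mp hsub
    have hne : α.Nonempty := by
      rw [← Finset.image_nonempty (f := (Sum.inl : V → V ⊕ W)), hα]
      exact faces_nonempty' _ p.lo_face
    exact ⟨α, α', K.down_closed hα' hαsub hne, hα', hα.symm, hh⟩
  · right
    have hsub := p.lo_sub
    rw [hh] at hsub
    obtain ⟨β, hβsub, hβ⟩ := Finset.subset_image_iff.mp hsub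
    have hne : β.Nonempty := by
      rw [← Finset.image_nonempty (f := (Sum.inr : W → V ⊕ W)), hβ]
      exact faces_nonempty' _ p.lo_face
    exact ⟨β, β', L.down_closed hβ' hβsub hne, hβ', hβ.symm, hh⟩

noncomputable def downK (p : VPair (sDisjUnion K L))
    (h : ∃ α α', K.faces α ∧ K.faces α' ∧ p.lo = α.image Sum.inl ∧ p.hi = α'.image Sum.inl) :
    VPair K where
  lo := p.lo.toLeft
  hi := p.hi.toLeft
  lo_face := by obtain ⟨α, α', h1, h2, h3, h4⟩ := h; rw [h3, toLeft_image_inl]; exact h1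
  hi_face := by obtain ⟨α, α', h1, h2, h3, h4⟩ := h; rw [h4, toLeft_image_inl]; exact h2
  lo_sub := Finset.toLeft_subset_toLeft p.lo_sub
  card_eq := by
    obtain ⟨α, α', h1, h2, h3, h4⟩ := h
    have hc := p.card_eq
    rw [h3, h4, Finset.card_image_of_injective _ Sum.inl_injective,
      Finset.card_image_of_injective _ Sum.inl_injective] at hc
    rw [h3, h4, toLeft_image_inl, toLeft_image_inl]
    exact hc

noncomputable def downL (p : VPair (sDisjUnion K L))
    (h : ∃ β β', L.faces β ∧ L.faces β' ∧ p.lo = β.image Sum.inr ∧ p.hi = β'.image Sum.inr) :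
    VPair L where
  lo := p.lo.toRight
  hi := p.hi.toRight
  lo_face := by obtain ⟨β, β', h1, h2, h3, h4⟩ := h; rw [h3, toRight_image_inr]; exact h1
  hi_face := by obtain ⟨β, β', h1, h2, h3, h4⟩ := h; rw [h4, toRight_image_inr]; exact h2
  lo_sub := Finset.toRight_subset_toRight p.lo_sub
  card_eq := by
    obtain ⟨β, β', h1, h2, h3, h4⟩ := h
    have hc := p.card_eq
    rw [h3, h4, Finset.card_image_of_injective _ Sum.inr_injective,
      Finset.card_image_of_injective _ Sum.inr_injective] at hc
    rw [h3, h4, toRight_image_inr, toRight_image_inr]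
    exact hc

def liftK (q : VPair K) : VPair (sDisjUnion K L) where
  lo := q.lo.image Sum.inl
  hi := q.hi.image Sum.inl
  lo_face := (disjUnion_faces_iff K L _).mpr (Or.inl ⟨q.lo, q.lo_face, rfl⟩)
  hi_face := (disjUnion_faces_iff K L _).mpr (Or.inl ⟨q.hi, q.hi_face, rfl⟩)
  lo_sub := Finset.image_subset_image q.lo_sub
  card_eq := by
    simp [Finset.card_image_of_injective _ Sum.inl_injective, q.card_eq]

def liftL (r : VPair L) : VPair (sDisjUnion K L) where
  lo := r.lo.image Sum.inr
  hi := r.hi.image Sum.inr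
  lo_face := (disjUnion_faces_iff K L _).mpr (Or.inr ⟨r.lo, r.lo_face, rfl⟩)
  hi_face := (disjUnion_faces_iff K L _).mpr (Or.inr ⟨r.hi, r.hi_face, rfl⟩)
  lo_sub := Finset.image_subset_image r.lo_sub
  card_eq := by
    simp [Finset.card_image_of_injective _ Sum.inr_injective, r.card_eq]

lemma liftK_downK (p : VPair (sDisjUnion K L)) (h) :
    liftK K L (downK K L p h) = p := by
  obtain ⟨α, α', h1, h2, h3, h4⟩ := h
  apply VPair.ext'
  · show (p.lo.toLeft).image Sum.inl = p.lo
    rw [h3, toLeft_image_inl]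
  · show (p.hi.toLeft).image Sum.inl = p.hi
    rw [h4, toLeft_image_inl]

lemma liftL_downL (p : VPair (sDisjUnion K L)) (h) :
    liftL K L (downL K L p h) = p := by
  obtain ⟨β, β', h1, h2, h3, h4⟩ := h
  apply VPair.ext'
  · show (p.lo.toRight).image Sum.inr = p.lo
    rw [h3, toRight_image_inr]
  · show (p.hi.toRight).image Sum.inr = p.hi
    rw [h4, toRight_image_inr]

lemma downK_liftK (q : VPair K) (h) : downK K L (liftK K L q) h = q := by
  apply VPair.ext'
  · show ((q.lo.image Sum.inl : Finset (V ⊕ W))).toLeft = q.lo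
    rw [toLeft_image_inl]
  · show ((q.hi.image Sum.inl : Finset (V ⊕ W))).toLeft = q.hi
    rw [toLeft_image_inl]

lemma downL_liftL (r : VPair L) (h) : downL K L (liftL K L r) h = r := by
  apply VPair.ext'
  · show ((r.lo.image Sum.inr : Finset (V ⊕ W))).toRight = r.lo
    rw [toRight_image_inr]
  · show ((r.hi.image Sum.inr : Finset (V ⊕ W))).toRight = r.hi
    rw [toRight_image_inr]

lemma compat_liftK_iff (q q' : VPair K) :
    VPair.Compatible (liftK K L q) (liftK K L q') ↔ VPair.Compatible q q' := by
  unfold VPair.Compatible liftK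
  simp only [(Finset.image_injective Sum.inl_injective).ne_iff]

lemma compat_liftL_iff (r r' : VPair L) :
    VPair.Compatible (liftL K L r) (liftL K L r') ↔ VPair.Compatible r r' := by
  unfold VPair.Compatible liftL
  simp only [(Finset.image_injective Sum.inr_injective).ne_iff]

lemma compat_liftK_liftL (q : VPair K) (r : VPair L) :
    VPair.Compatible (liftK K L q) (liftL K L r) :=
  ⟨image_inl_ne_image_inr' (faces_nonempty' _ q.lo_face),
   image_inl_ne_image_inr' (faces_nonempty' _ q.lo_face),
   image_inl_ne_image_inr' (faces_nonempty' _ q.hi_face),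
   image_inl_ne_image_inr' (faces_nonempty' _ q.hi_face)⟩

open Classical in
noncomputable def theToFun (p : VPair (sDisjUnion K L)) : VPair K ⊕ VPair L :=
  if h : ∃ α α', K.faces α ∧ K.faces α' ∧ p.lo = α.image Sum.inl ∧ p.hi = α'.image Sum.inl
  then Sum.inl (downK K L p h)
  else Sum.inr (downL K L p ((pair_sides K L p).resolve_left h))

noncomputable def theInvFun : VPair K ⊕ VPair L → VPair (sDisjUnion K L) :=
  Sum.elim (liftK K L) (liftL K L)

lemma theInvFun_theToFun (p : VPair (sDisjUnion K L)) :
    theInvFun K L (theToFun K L p) = p := by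
  unfold theToFun
  split
  · exact liftK_downK K L p _
  · exact liftL_downL K L p _

lemma theToFun_liftK (q : VPair K) : theToFun K L (liftK K L q) = Sum.inl q := by
  unfold theToFun
  rw [dif_pos ⟨q.lo, q.hi, q.lo_face, q.hi_face, rfl, rfl⟩]
  rw [downK_liftK]

lemma theToFun_liftL (r : VPair L) : theToFun K L (liftL K L r) = Sum.inr r := by
  unfold theToFun
  rw [dif_neg, downL_liftL]
  rintro ⟨α, α', h1, h2, h3, h4⟩
  exact image_inl_ne_image_inr' (faces_nonempty' K h2) h4.symm

lemma liftK_injective : Function.Injective (liftK K L) := by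
  intro q q' h
  have := congrArg (theToFun K L) h
  rw [theToFun_liftK, theToFun_liftK, Sum.inl.injEq] at this
  exact this

lemma liftL_injective : Function.Injective (liftL K L) := by
  intro r r' h
  have := congrArg (theToFun K L) h
  rw [theToFun_liftL, theToFun_liftL, Sum.inr.injEq] at this
  exact this

lemma mem_fimage' {A B : Type*} {f : A → B} {s : Finset A} {b : B} :
    b ∈ fimage f s ↔ ∃ a ∈ s, f a = b := by
  unfold fimage
  exact @Finset.mem_image _ _ (Classical.decEq B) f s b

lemma mem_toLeft_fimage (S : Finset (VPair (sDisjUnion K L))) (q : VPair K) :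
    q ∈ (fimage (theToFun K L) S).toLeft ↔ liftK K L q ∈ S := by
  rw [Finset.mem_toLeft, mem_fimage']
  constructor
  · rintro ⟨p, hp, hpq⟩
    have h := theInvFun_theToFun K L p
    rw [hpq] at h
    have h2 : liftK K L q = p := h
    exact h2 ▸ hp
  · intro h
    exact ⟨liftK K L q, h, theToFun_liftK K L q⟩

lemma mem_toRight_fimage (S : Finset (VPair (sDisjUnion K L))) (r : VPair L) :
    r ∈ (fimage (theToFun K L) S).toRight ↔ liftL K L r ∈ S := by
  rw [Finset.mem_toRight, mem_fimage']
  constructor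
  · rintro ⟨p, hp, hpq⟩
    have h := theInvFun_theToFun K L p
    rw [hpq] at h
    have h2 : liftL K L r = p := h
    exact h2 ▸ hp
  · intro h
    exact ⟨liftL K L r, h, theToFun_liftL K L r⟩

end Stmt8Aux

/-- for disjoint `K`, `L`, each with at least one edge,
`M(K ⊔ L) = M(K) * M(L)`. -/
theorem stmt_8 {V W : Type*} [DecidableEq V] [DecidableEq W]
    (K : SComplex V) (L : SComplex W)
    (hK : ∃ σ, K.faces σ ∧ σ.card = 2) (hL : ∃ σ, L.faces σ ∧ σ.card = 2) :
    Nonempty (ComplexIso (MorseComplex (sDisjUnion K L)).faces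
      (sJoin (MorseComplex K) (MorseComplex L)).faces) := by
  refine ⟨{
    toFun := theToFun K L
    invFun := theInvFun K L
    left_inv := fun p _ => theInvFun_theToFun K L p
    right_inv := by
      rintro (q | r) _
      · exact theToFun_liftK K L q
      · exact theToFun_liftL K L r
    map_face := ?_
    inv_face := ?_ }⟩
  · -- map_face
    rintro S ⟨hne, hdvf, hnc⟩
    rw [join_faces_iff]
    refine ⟨?_, ?_, ?_⟩
    · obtain ⟨p, hp⟩ := hne
      exact ⟨theToFun K L p, mem_fimage'.mpr ⟨p, hp, rfl⟩⟩
    · rcases (fimage (theToFun K L) S).toLeft.eq_empty_or_nonempty with he | hne'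
      · exact Or.inr he
      · refine Or.inl ⟨hne', ?_, ?_⟩
        · intro q hq q' hq' hqq'
          have h1 := (mem_toLeft_fimage K L S q).mp hq
          have h2 := (mem_toLeft_fimage K L S q').mp hq'
          have hne2 : liftK K L q ≠ liftK K L q' :=
            fun h => hqq' (liftK_injective K L h)
          exact (compat_liftK_iff K L q q').mp (hdvf _ h1 _ h2 hne2)
        · rintro ⟨k, hk, c, hcm, hcp⟩
          refine hnc ⟨k, hk, fun i => liftK K L (c i),
            fun i => (mem_toLeft_fimage K L S (c i)).mp (hcm i), fun i => ?_⟩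
          refine ⟨Finset.image_subset_image (hcp i).1, ?_, ?_⟩
          · intro h
            exact (hcp i).2.1 (Finset.image_injective Sum.inl_injective h)
          · show ((c (i+1)).lo.image Sum.inl).card + 1 = ((c i).hi.image Sum.inl).card
            rw [Finset.card_image_of_injective _ Sum.inl_injective,
                Finset.card_image_of_injective _ Sum.inl_injective]
            exact (hcp i).2.2
    · rcases (fimage (theToFun K L) S).toRight.eq_empty_or_nonempty with he | hne'
      · exact Or.inr he
      · refine Or.inl ⟨hne', ?_, ?_⟩
        · intro r hr r' hr' hrr'
          have h1 := (mem_toRight_fimage K L S r).mp hr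
          have h2 := (mem_toRight_fimage K L S r').mp hr'
          have hne2 : liftL K L r ≠ liftL K L r' :=
            fun h => hrr' (liftL_injective K L h)
          exact (compat_liftL_iff K L r r').mp (hdvf _ h1 _ h2 hne2)
        · rintro ⟨k, hk, c, hcm, hcp⟩
          refine hnc ⟨k, hk, fun i => liftL K L (c i),
            fun i => (mem_toRight_fimage K L S (c i)).mp (hcm i), fun i => ?_⟩
          refine ⟨Finset.image_subset_image (hcp i).1, ?_, ?_⟩
          · intro h
            exact (hcp i).2.1 (Finset.image_injective Sum.inr_injective h)
          · show ((c (i+1)).lo.image Sum.inr).card + 1 = ((c i).hi.image Sum.inr).card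
            rw [Finset.card_image_of_injective _ Sum.inr_injective,
                Finset.card_image_of_injective _ Sum.inr_injective]
            exact (hcp i).2.2
  · -- inv_face
    intro T hT
    rw [join_faces_iff] at hT
    obtain ⟨hne, hA, hB⟩ := hT
    have hmem : ∀ p, p ∈ fimage (theInvFun K L) T →
        (∃ q ∈ T.toLeft, p = liftK K L q) ∨ (∃ r ∈ T.toRight, p = liftL K L r) := by
      intro p hp
      obtain ⟨x, hx, hxp⟩ := mem_fimage'.mp hp
      rcases x with q | r
      · exact Or.inl ⟨q, Finset.mem_toLeft.mpr hx, hxp.symm⟩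
      · exact Or.inr ⟨r, Finset.mem_toRight.mpr hx, hxp.symm⟩
    have hKface : T.toLeft.Nonempty → IsGVF {q | q ∈ T.toLeft} := by
      intro h
      rcases hA with h' | h'
      · exact h'.2
      · rw [h'] at h
        exact absurd h (by simp)
    have hLface : T.toRight.Nonempty → IsGVF {r | r ∈ T.toRight} := by
      intro h
      rcases hB with h' | h'
      · exact h'.2
      · rw [h'] at h
        exact absurd h (by simp)
    refine ⟨?_, ?_, ?_⟩
    · obtain ⟨x, hx⟩ := hne
      exact ⟨theInvFun K L x, mem_fimage'.mpr ⟨x, hx, rfl⟩⟩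
    · intro p hp p' hp' hpp'
      rcases hmem p hp with ⟨q, hq, rfl⟩ | ⟨r, hr, rfl⟩ <;>
        rcases hmem p' hp' with ⟨q', hq', rfl⟩ | ⟨r', hr', rfl⟩
      · have hgvf := hKface ⟨q, hq⟩
        have hne2 : q ≠ q' := fun h => hpp' (congrArg _ h)
        exact (compat_liftK_iff K L q q').mpr (hgvf.1 q hq q' hq' hne2)
      · exact compat_liftK_liftL K L q r'
      · exact (compat_liftK_liftL K L q' r).symm'
      · have hgvf := hLface ⟨r, hr⟩
        have hne2 : r ≠ r' := fun h => hpp' (congrArg _ h)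
        exact (compat_liftL_iff K L r r').mpr (hgvf.1 r hr r' hr' hne2)
    · rintro ⟨k, hk, c, hcm, hcp⟩
      haveI : NeZero k := ⟨hk.ne'⟩
      have hside : ∀ i, (∃ q ∈ T.toLeft, c i = liftK K L q) ∨
          (∃ r ∈ T.toRight, c i = liftL K L r) := fun i => hmem (c i) (hcm i)
      have hstepL : ∀ i, (∃ q ∈ T.toLeft, c i = liftK K L q) →
          (∃ q ∈ T.toLeft, c (i+1) = liftK K L q) := by
        rintro i ⟨q, hq, hc⟩
        rcases hside (i+1) with h | ⟨r, hr, hc'⟩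
        · exact h
        · exfalso
          have hsub := (hcp i).1
          rw [hc, hc'] at hsub
          obtain ⟨x, hx⟩ := faces_nonempty' L r.lo_face
          have hx2 : (Sum.inr x : V ⊕ W) ∈ (q.hi.image Sum.inl : Finset (V ⊕ W)) :=
            hsub (Finset.mem_image_of_mem _ hx)
          simp at hx2
      have hstepR : ∀ i, (∃ r ∈ T.toRight, c i = liftL K L r) →
          (∃ r ∈ T.toRight, c (i+1) = liftL K L r) := by
        rintro i ⟨r, hr, hc⟩
        rcases hside (i+1) with ⟨q, hq, hc'⟩ | h
        · exfalso
          have hsub := (hcp i).1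
          rw [hc, hc'] at hsub
          obtain ⟨x, hx⟩ := faces_nonempty' K q.lo_face
          have hx2 : (Sum.inl x : V ⊕ W) ∈ (r.hi.image Sum.inr : Finset (V ⊕ W)) :=
            hsub (Finset.mem_image_of_mem _ hx)
          simp at hx2
        · exact h
      rcases hside 0 with h0 | h0
      · have hall : ∀ n : ℕ, ∃ q ∈ T.toLeft, c (n : ZMod k) = liftK K L q := by
          intro n
          induction n with
          | zero => exact_mod_cast h0
          | succ n ih =>
            have h := hstepL _ ih
            rwa [show ((n : ZMod k) + 1) = ((n + 1 : ℕ) : ZMod k) by push_cast; ring] at h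
        have hall' : ∀ i : ZMod k, ∃ q ∈ T.toLeft, c i = liftK K L q := by
          intro i
          obtain ⟨n, rfl⟩ := ZMod.natCast_zmod_surjective i
          exact hall n
        choose q hq1 hq2 using hall'
        have hne' : T.toLeft.Nonempty := ⟨q 0, hq1 0⟩
        refine (hKface hne').2 ⟨k, hk, q, hq1, fun i => ?_⟩
        have h1 := (hcp i).1
        have h2 := (hcp i).2.1
        have h3 := (hcp i).2.2
        rw [hq2 i, hq2 (i+1)] at h1 h2 h3
        refine ⟨(Finset.image_subset_image_iff Sum.inl_injective).mp h1,
          fun h => h2 (congrArg (Finset.image Sum.inl) h), ?_⟩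
        have h3' : ((q (i+1)).lo.image Sum.inl : Finset (V ⊕ W)).card + 1 =
            ((q i).hi.image Sum.inl : Finset (V ⊕ W)).card := h3
        rwa [Finset.card_image_of_injective _ Sum.inl_injective,
          Finset.card_image_of_injective _ Sum.inl_injective] at h3'
      · have hall : ∀ n : ℕ, ∃ r ∈ T.toRight, c (n : ZMod k) = liftL K L r := by
          intro n
          induction n with
          | zero => exact_mod_cast h0
          | succ n ih =>
            have h := hstepR _ ih
            rwa [show ((n : ZMod k) + 1) = ((n + 1 : ℕ) : ZMod k) by push_cast; ring] at h
        have hall' : ∀ i : ZMod k, ∃ r ∈ T.toRight, c i = liftL K L r := by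
          intro i
          obtain ⟨n, rfl⟩ := ZMod.natCast_zmod_surjective i
          exact hall n
        choose r hr1 hr2 using hall'
        have hne' : T.toRight.Nonempty := ⟨r 0, hr1 0⟩
        refine (hLface hne').2 ⟨k, hk, r, hr1, fun i => ?_⟩
        have h1 := (hcp i).1
        have h2 := (hcp i).2.1
        have h3 := (hcp i).2.2
        rw [hr2 i, hr2 (i+1)] at h1 h2 h3
        refine ⟨(Finset.image_subset_image_iff Sum.inr_injective).mp h1,
          fun h => h2 (congrArg (Finset.image Sum.inr) h), ?_⟩
        have h3' : ((r (i+1)).lo.image Sum.inr : Finset (V ⊕ W)).card + 1 =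
            ((r i).hi.image Sum.inr : Finset (V ⊕ W)).card := h3
        rwa [Finset.card_image_of_injective _ Sum.inr_injective,
          Finset.card_image_of_injective _ Sum.inr_injective] at h3'
end

section
/- The Morse complex of the centipede graph 𝒞_v (a path on v vertices with one leaf attached to each vertex) is homotopy equivalent to S^{v-1}. -/
open Finset

namespace Stmt14

open Sum Finset

variable {v : ℕ}

/-- The centipede complex. -/
abbrev CK (v : ℕ) : SComplex (Fin v ⊕ Fin v) := addLeaves (SimpleGraph.pathGraph v)

/-- Generators of the centipede. -/
def Gen (v : ℕ) (τ : Finset (Fin v ⊕ Fin v)) : Prop :=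
  (∃ x y, (SimpleGraph.pathGraph v).Adj x y ∧ τ = {inl x, inl y}) ∨ ∃ u, τ = {inl u, inr u}

lemma faces_CK_iff {σ : Finset (Fin v ⊕ Fin v)} :
    (CK v).faces σ ↔ σ.Nonempty ∧ ∃ τ, Gen v τ ∧ σ ⊆ τ := by
  constructor
  · rintro ⟨h1, τ, hτ, hsub⟩
    exact ⟨h1, τ, hτ, hsub⟩
  · rintro ⟨h1, τ, hτ, hsub⟩
    exact ⟨h1, τ, hτ, hsub⟩

lemma gen_card {τ : Finset (Fin v ⊕ Fin v)} (h : Gen v τ) : τ.card = 2 := by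
  rcases h with ⟨x, y, hadj, rfl⟩ | ⟨u, rfl⟩
  · rw [card_insert_of_notMem (by simp [hadj.ne]), card_singleton]
  · rw [card_insert_of_notMem (by simp), card_singleton]

/-- depth of a vertex in the rooted centipede. -/
def depth : Fin v ⊕ Fin v → ℕ := Sum.elim (·.val) (·.val + 1)

lemma gen_depth {τ : Finset (Fin v ⊕ Fin v)} (h : Gen v τ) {x y : Fin v ⊕ Fin v}
    (hx : x ∈ τ) (hy : y ∈ τ) (hxy : x ≠ y) :
    depth x + 1 = depth y ∨ depth y + 1 = depth x := by
  rcases h with ⟨a, b, hadj, rfl⟩ | ⟨u, rfl⟩ <;>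
    simp only [mem_insert, mem_singleton] at hx hy
  · rw [SimpleGraph.pathGraph_adj] at hadj
    rcases hx with rfl | rfl <;> rcases hy with rfl | rfl <;>
      simp_all [depth] <;> omega
  · rcases hx with rfl | rfl <;> rcases hy with rfl | rfl <;> simp_all [depth]

lemma gen_eq_pair {τ : Finset (Fin v ⊕ Fin v)} (h : Gen v τ) {x y : Fin v ⊕ Fin v}
    (hx : x ∈ τ) (hy : y ∈ τ) (hxy : x ≠ y) : τ = {x, y} := by
  refine (Finset.eq_of_subset_of_card_le ?_ ?_).symm
  · intro z hz
    simp only [mem_insert, mem_singleton] at hz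
    rcases hz with rfl | rfl <;> assumption
  · rw [gen_card h, card_insert_of_notMem (by simp [hxy]), card_singleton]

lemma parent_val {τ : Finset (Fin v ⊕ Fin v)} (h : Gen v τ) {x y : Fin v ⊕ Fin v}
    (hx : x ∈ τ) (hy : y ∈ τ) (hd : depth y + 1 = depth x) :
    (∃ j c : Fin v, x = inl j ∧ y = inl c ∧ c.val + 1 = j.val) ∨
      (∃ u : Fin v, x = inr u ∧ y = inl u) := by
  rcases h with ⟨a, b, hadj, rfl⟩ | ⟨u, rfl⟩ <;>
    simp only [mem_insert, mem_singleton] at hx hy <;>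
    rcases hx with rfl | rfl <;> rcases hy with rfl | rfl <;>
    simp only [depth, Sum.elim_inl, Sum.elim_inr] at hd <;>
    first
      | omega
      | exact Or.inl ⟨_, _, rfl, rfl, by omega⟩
      | exact Or.inr ⟨_, rfl, rfl⟩

lemma parent_unique {τ τ' : Finset (Fin v ⊕ Fin v)} (h : Gen v τ) (h' : Gen v τ')
    {x y y' : Fin v ⊕ Fin v} (hx : x ∈ τ) (hx' : x ∈ τ') (hy : y ∈ τ) (hy' : y' ∈ τ')
    (hd : depth y + 1 = depth x) (hd' : depth y' + 1 = depth x) : y = y' := by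
  rcases parent_val h hx hy hd with ⟨j, c, hj, hc1, hc⟩ | ⟨u, hu, hu1⟩
  · rcases parent_val h' hx' hy' hd' with ⟨j', c', hj', hc1', hc'⟩ | ⟨u', hu', hu1'⟩
    · rw [hj] at hj'
      injection hj' with hj'
      subst hj'
      rw [hc1, hc1']
      congr 1
      exact Fin.ext (by omega)
    · rw [hj] at hu'
      simp at hu'
  · rcases parent_val h' hx' hy' hd' with ⟨j', c', hj', hc1', hc'⟩ | ⟨u', hu', hu1'⟩
    · rw [hu] at hj'
      simp at hj'
    · rw [hu] at hu'
      injection hu' with hu'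
      subst hu'
      rw [hu1, hu1']

lemma VPair.ext' {W : Type*} {K : SComplex W} {p q : VPair K}
    (h1 : p.lo = q.lo) (h2 : p.hi = q.hi) : p = q := by
  cases p; cases q
  simp only at h1 h2
  subst h1; subst h2
  rfl

lemma pair_shape (P : VPair (CK v)) :
    ∃ x y : Fin v ⊕ Fin v, P.lo = {x} ∧ P.hi = {x, y} ∧ x ≠ y ∧ Gen v P.hi := by
  obtain ⟨hne, τ, hgen, hsub⟩ := faces_CK_iff.mp P.hi_face
  have hlone := (faces_CK_iff.mp P.lo_face).1
  have hcard2 : P.hi.card ≤ 2 := by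
    calc P.hi.card ≤ τ.card := Finset.card_le_card hsub
    _ = 2 := gen_card hgen
  have hlo1 : P.lo.card = 1 := by
    have := P.card_eq
    have := Finset.card_pos.mpr hlone
    omega
  obtain ⟨x, hx⟩ := Finset.card_eq_one.mp hlo1
  have hhi2 : P.hi.card = 2 := by rw [P.card_eq, hlo1]
  have hhieq : P.hi = τ := Finset.eq_of_subset_of_card_le hsub (by rw [hhi2, gen_card hgen])
  have hgenhi : Gen v P.hi := hhieq ▸ hgen
  have hxhi : x ∈ P.hi := P.lo_sub (by simp [hx])
  obtain ⟨a, b, hab, habeq⟩ := Finset.card_eq_two.mp hhi2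
  have hxab : x = a ∨ x = b := by
    rw [habeq] at hxhi; simpa using hxhi
  rcases hxab with rfl | rfl
  · exact ⟨x, b, hx, habeq, hab, hgenhi⟩
  · exact ⟨x, a, hx, by rw [habeq, Finset.pair_comm], (Ne.symm hab), hgenhi⟩

lemma lo_card (P : VPair (CK v)) : P.lo.card = 1 := by
  obtain ⟨x, y, h1, -, -, -⟩ := pair_shape P
  simp [h1]

lemma hi_card (P : VPair (CK v)) : P.hi.card = 2 := by
  obtain ⟨x, y, -, -, -, h⟩ := pair_shape P
  exact gen_card h

lemma compat_of {P Q : VPair (CK v)} (h1 : P.lo ≠ Q.lo) (h2 : P.hi ≠ Q.hi) :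
    P.Compatible Q := by
  refine ⟨h1, fun h => ?_, fun h => ?_, h2⟩
  · have hP := lo_card P; have hQ := hi_card Q; rw [h] at hP; omega
  · have hP := hi_card P; have hQ := lo_card Q; rw [h] at hP; omega

lemma compat_symm {W : Type*} {K : SComplex W} {p q : VPair K}
    (h : p.Compatible q) : q.Compatible p :=
  ⟨h.1.symm, h.2.2.1.symm, h.2.1.symm, h.2.2.2.symm⟩

lemma no_cycle (W : Set (VPair (CK v)))
    (hW : ∀ p ∈ W, ∀ q ∈ W, p ≠ q → VPair.Compatible p q) : ¬ HasClosedPath W := by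
  rintro ⟨k, hk, c, hcW, hstep⟩
  haveI : NeZero k := ⟨hk.ne'⟩
  choose x y hlo hhi hxy hgen using fun i => pair_shape (c i)
  -- x (i+1) ∈ (c i).hi and x (i+1) ≠ x i
  have hxin : ∀ i, x (i + 1) ∈ (c i).hi := by
    intro i
    exact (hstep i).1 (by simp [hlo])
  have hxne : ∀ i, x (i + 1) ≠ x i := by
    intro i h
    exact (hstep i).2.1 (by rw [hlo, hlo, h])
  have hxself : ∀ i, x i ∈ (c i).hi := fun i => (c i).lo_sub (by simp [hlo])
  -- maximum depth index
  obtain ⟨i0, -, hmax⟩ := Finset.exists_max_image (Finset.univ : Finset (ZMod k))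
    (fun i => depth (x i)) ⟨0, Finset.mem_univ 0⟩
  have hdown : ∀ i, x (i + 1) ∈ (c i).hi → depth (x (i + 1)) + 1 = depth (x i) →
      True := fun _ _ _ => trivial
  have hd1 : depth (x (i0 + 1)) + 1 = depth (x i0) := by
    rcases gen_depth (hgen i0) (hxself i0) (hxin i0) (fun h => hxne i0 h.symm) with h | h
    · exact h.symm ▸ h ▸ absurd (hmax (i0 + 1) (Finset.mem_univ _)) (by omega)
    · exact h
  have hstep' := hstep (i0 - 1)
  have heq1 : (i0 - 1) + 1 = i0 := by ring
  have hxin' : x i0 ∈ (c (i0 - 1)).hi := by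
    have := (hstep (i0 - 1)).1
    rw [heq1] at this
    exact this (by simp [hlo])
  have hxne' : x i0 ≠ x (i0 - 1) := by
    intro h
    have := (hstep (i0 - 1)).2.1
    rw [heq1] at this
    exact this (by rw [hlo, hlo, h])
  have hd2 : depth (x (i0 - 1)) + 1 = depth (x i0) := by
    rcases gen_depth (hgen (i0 - 1)) (hxself (i0 - 1)) hxin' hxne'.symm with h | h
    · exact h
    · exact absurd (hmax (i0 - 1) (Finset.mem_univ _)) (by omega)
  have hyy : x (i0 + 1) = x (i0 - 1) :=
    parent_unique (hgen i0) (hgen (i0 - 1)) (hxself i0) hxin' (hxin i0) (hxself (i0 - 1)) hd1 hd2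
  -- the two pairs c i0 and c (i0 - 1) are distinct but share hi
  have hcne : c (i0 - 1) ≠ c i0 := by
    intro h
    have h2 := hlo (i0 - 1)
    rw [h, hlo i0] at h2
    exact hxne' (Finset.singleton_injective h2)
  have hcompat := hW _ (hcW (i0 - 1)) _ (hcW i0) hcne
  apply hcompat.2.2.2
  have e1 : (c (i0 - 1)).hi = {x (i0 - 1), x i0} :=
    gen_eq_pair (hgen (i0 - 1)) (hxself (i0 - 1)) hxin' hxne'.symm
  have e2 : (c i0).hi = {x i0, x (i0 + 1)} :=
    gen_eq_pair (hgen i0) (hxself i0) (hxin i0) (fun h => hxne i0 h.symm)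
  rw [e1, e2, hyy, Finset.pair_comm]

lemma morse_faces_iff {S : Finset (VPair (CK v))} :
    (MorseComplex (CK v)).faces S ↔ S.Nonempty ∧
      ∀ p ∈ S, ∀ q ∈ S, p ≠ q → VPair.Compatible p q := by
  constructor
  · rintro ⟨h1, h2, -⟩
    exact ⟨h1, h2⟩
  · rintro ⟨h1, h2⟩
    exact ⟨h1, h2, no_cycle _ h2⟩


/-- The leaf-edge generator. -/
lemma gen_leaf (i : Fin v) : Gen v ({inl i, inr i} : Finset (Fin v ⊕ Fin v)) :=
  Or.inr ⟨i, rfl⟩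

lemma leaf_card (i : Fin v) : ({inl i, inr i} : Finset (Fin v ⊕ Fin v)).card = 2 :=
  gen_card (gen_leaf i)

lemma leaf_face (i : Fin v) : (CK v).faces ({inl i, inr i} : Finset (Fin v ⊕ Fin v)) :=
  faces_CK_iff.mpr ⟨⟨inl i, by simp⟩, _, gen_leaf i, subset_rfl⟩

/-- Vertex `(p_i, f_i)` of the octahedron. -/
def A (i : Fin v) : VPair (CK v) where
  lo := {inl i}
  hi := {inl i, inr i}
  lo_face := (CK v).down_closed (leaf_face i) (by simp) ⟨inl i, by simp⟩
  hi_face := leaf_face i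
  lo_sub := by simp
  card_eq := by rw [leaf_card, Finset.card_singleton]

/-- Vertex `(l_i, f_i)` of the octahedron. -/
def B (i : Fin v) : VPair (CK v) where
  lo := {inr i}
  hi := {inl i, inr i}
  lo_face := (CK v).down_closed (leaf_face i) (by simp) ⟨inr i, by simp⟩
  hi_face := leaf_face i
  lo_sub := by simp
  card_eq := by rw [leaf_card, Finset.card_singleton]

@[simp] lemma A_lo (i : Fin v) : (A i).lo = {inl i} := rfl
@[simp] lemma A_hi (i : Fin v) : (A i).hi = {inl i, inr i} := rfl
@[simp] lemma B_lo (i : Fin v) : (B i).lo = {inr i} := rfl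
@[simp] lemma B_hi (i : Fin v) : (B i).hi = {inl i, inr i} := rfl

lemma A_inj : Function.Injective (A (v := v)) := by
  intro i j h
  have : ({inl i} : Finset (Fin v ⊕ Fin v)) = {inl j} := congrArg VPair.lo h
  simpa using this

lemma B_inj : Function.Injective (B (v := v)) := by
  intro i j h
  have : ({inr i} : Finset (Fin v ⊕ Fin v)) = {inr j} := congrArg VPair.lo h
  simpa using this

lemma A_ne_B (i j : Fin v) : A i ≠ B j := by
  intro h
  have : ({inl i} : Finset (Fin v ⊕ Fin v)) = {inr j} := congrArg VPair.lo h
  simpa using this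

lemma leaf_ne_leaf {i j : Fin v} (h : i ≠ j) :
    ({inl i, inr i} : Finset (Fin v ⊕ Fin v)) ≠ {inl j, inr j} := by
  intro he
  have : (inl i : Fin v ⊕ Fin v) ∈ ({inl j, inr j} : Finset (Fin v ⊕ Fin v)) := by
    rw [← he]; simp
  simp only [Finset.mem_insert, Finset.mem_singleton] at this
  rcases this with h' | h' <;> simp_all

/-- every gen containing a leaf is the leaf edge -/
lemma gen_of_inr {τ : Finset (Fin v ⊕ Fin v)} (h : Gen v τ) {j : Fin v}
    (hj : inr j ∈ τ) : τ = {inl j, inr j} := by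
  rcases h with ⟨a, b, hadj, rfl⟩ | ⟨u, rfl⟩
  · simp at hj
  · simp only [Finset.mem_insert, Finset.mem_singleton] at hj
    rcases hj with h' | h' <;> simp_all

lemma pair_eq_B {P : VPair (CK v)} {j : Fin v} (h : P.lo = {inr j}) : P = B j := by
  obtain ⟨x, y, hlo, hhi, hxy, hgen⟩ := pair_shape P
  have hx : x = inr j := by
    rw [h] at hlo
    exact (Finset.singleton_injective hlo).symm
  have hin : inr j ∈ P.hi := P.lo_sub (by simp [h])
  exact VPair.ext' h (gen_of_inr hgen hin)

lemma pair_eq_A {P : VPair (CK v)} {j : Fin v} (h1 : P.lo = {inl j})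
    (h2 : P.hi = {inl j, inr j}) : P = A j :=
  VPair.ext' h1 h2

/-- the retraction on vertices of the Morse complex -/
noncomputable def phi (P : VPair (CK v)) : VPair (CK v) :=
  if h : ∃ j : Fin v, P.lo = {inl j} ∧ P.hi ≠ {inl j, inr j} then B h.choose else P

lemma phi_cases (P : VPair (CK v)) :
    (phi P = P ∧ ∀ j : Fin v, P.lo = {inl j} → P.hi = {inl j, inr j}) ∨
      ∃ j : Fin v, P.lo = {inl j} ∧ P.hi ≠ {inl j, inr j} ∧ phi P = B j := by
  unfold phi
  by_cases h : ∃ j : Fin v, P.lo = {inl j} ∧ P.hi ≠ {inl j, inr j}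
  · right
    exact ⟨h.choose, h.choose_spec.1, h.choose_spec.2, by rw [dif_pos h]⟩
  · left
    push_neg at h
    exact ⟨by rw [dif_neg]; push_neg; exact h, h⟩

@[simp] lemma phi_A (i : Fin v) : phi (A i) = A i := by
  rcases phi_cases (A i) with ⟨h, -⟩ | ⟨j, hj, hne, -⟩
  · exact h
  · have hij : (inl i : Fin v ⊕ Fin v) = inl j := Finset.singleton_injective hj
    have : i = j := by simpa using hij
    subst this
    exact absurd rfl hne

@[simp] lemma phi_B (i : Fin v) : phi (B i) = B i := by
  rcases phi_cases (B i) with ⟨h, -⟩ | ⟨j, hj, hne, -⟩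
  · exact h
  · have : (inr i : Fin v ⊕ Fin v) = inl j := Finset.singleton_injective hj
    simp at this

lemma phi_oct (P : VPair (CK v)) : ∃ j : Fin v, phi P = A j ∨ phi P = B j := by
  rcases phi_cases P with ⟨hfix, hall⟩ | ⟨j, -, -, heq⟩
  · obtain ⟨x, y, hlo, -, -, -⟩ := pair_shape P
    rcases x with j | j
    · exact ⟨j, Or.inl (by rw [hfix]; exact pair_eq_A hlo (hall j hlo))⟩
    · exact ⟨j, Or.inr (by rw [hfix]; exact pair_eq_B hlo)⟩
  · exact ⟨j, Or.inr heq⟩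

lemma phi_fix_of_oct {P : VPair (CK v)} {j : Fin v} (h : P = A j ∨ P = B j) :
    phi P = P := by
  rcases h with rfl | rfl <;> simp

section Compat

variable {S : Finset (VPair (CK v))}
  (hS : ∀ p ∈ S, ∀ q ∈ S, p ≠ q → VPair.Compatible p q)

include hS

/-- image-original compatibility -/
lemma compat_phi_orig {p q : VPair (CK v)} (hp : p ∈ S) (hq : q ∈ S)
    (hne : phi p ≠ q) : (phi p).Compatible q := by
  rcases phi_cases p with ⟨hfix, -⟩ | ⟨j, hlo, hhi, heq⟩
  · rw [hfix] at hne ⊢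
    exact hS p hp q hq hne
  · rw [heq] at hne ⊢
    refine compat_of ?_ ?_
    · intro h
      exact hne (pair_eq_B (h.symm)).symm
    · intro h
      -- q.hi = {inl j, inr j}
      obtain ⟨x, y, hqlo, -, -, -⟩ := pair_shape q
      have hx : x ∈ q.hi := q.lo_sub (by simp [hqlo])
      rw [← h] at hx
      simp only [B_hi, Finset.mem_insert, Finset.mem_singleton] at hx
      rcases hx with rfl | rfl
      · -- q.lo = {inl j} = p.lo
        by_cases hpq : p = q
        · subst hpq
          exact hhi h.symm
        · exact (hS p hp q hq hpq).1 (by rw [hlo, hqlo])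
      · exact hne (pair_eq_B hqlo).symm

/-- image-image compatibility -/
lemma compat_phi_phi {p q : VPair (CK v)} (hp : p ∈ S) (hq : q ∈ S)
    (hne : phi p ≠ phi q) : (phi p).Compatible (phi q) := by
  rcases phi_cases q with ⟨hfix, -⟩ | ⟨m, hlo', hhi', heq'⟩
  · rw [hfix] at hne ⊢
    exact compat_phi_orig hS hp hq hne
  · rcases phi_cases p with ⟨hfix, -⟩ | ⟨j, hlo, hhi, heq⟩
    · rw [hfix] at hne ⊢
      exact compat_symm (compat_phi_orig hS hq hp (fun h => hne h.symm))
    · rw [heq, heq'] at hne ⊢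
      have hjm : j ≠ m := by
        intro h
        exact hne (h ▸ rfl)
      refine compat_of ?_ ?_
      · simp only [B_lo, ne_eq, Finset.singleton_inj]
        intro h
        exact hjm (by simpa using h)
      · simp only [B_hi]
        exact leaf_ne_leaf hjm

lemma union_compat :
    ∀ p ∈ S ∪ S.image phi, ∀ q ∈ S ∪ S.image phi, p ≠ q → VPair.Compatible p q := by
  intro p hp q hq hne
  rw [Finset.mem_union] at hp hq
  rcases hp with hp | hp <;> rcases hq with hq | hq
  · exact hS p hp q hq hne
  · obtain ⟨q', hq', rfl⟩ := Finset.mem_image.mp hq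
    exact compat_symm (compat_phi_orig hS hq' hp (fun h => hne h.symm))
  · obtain ⟨p', hp', rfl⟩ := Finset.mem_image.mp hp
    exact compat_phi_orig hS hp' hq hne
  · obtain ⟨p', hp', rfl⟩ := Finset.mem_image.mp hp
    obtain ⟨q', hq', rfl⟩ := Finset.mem_image.mp hq
    exact compat_phi_phi hS hp' hq' hne

end Compat

noncomputable instance : Fintype (VPair (CK v)) :=
  Fintype.ofInjective (fun p => (p.lo, p.hi))
    (fun p q h => VPair.ext' (congrArg Prod.fst h) (congrArg Prod.snd h))

/-- pushforward of weights along `phi` -/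
noncomputable def push (f : VPair (CK v) → ℝ) (q : VPair (CK v)) : ℝ :=
  ∑ p : VPair (CK v), if phi p = q then f p else 0

lemma push_nonneg {f : VPair (CK v) → ℝ} (hf : ∀ p, 0 ≤ f p) (q : VPair (CK v)) :
    0 ≤ push f q := by
  apply Finset.sum_nonneg
  intro p _
  split <;> [exact hf p; rfl]

lemma push_continuous : Continuous (fun f => push (v := v) f) := by
  apply continuous_pi
  intro q
  apply continuous_finset_sum
  intro p _
  by_cases h : phi p = q
  · simpa [h] using continuous_apply p
  · simpa [h] using (continuous_const : Continuous fun _ : VPair (CK v) → ℝ => (0 : ℝ))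

lemma push_sum (f : VPair (CK v) → ℝ) :
    ∑ q : VPair (CK v), push f q = ∑ p : VPair (CK v), f p := by
  simp only [push]
  rw [Finset.sum_comm]
  apply Finset.sum_congr rfl
  intro p _
  simp [Finset.sum_ite_eq]

lemma push_support {f : VPair (CK v) → ℝ} {σ : Finset (VPair (CK v))}
    (hsupp : ∀ p, f p ≠ 0 → p ∈ σ) {q : VPair (CK v)} (hq : push f q ≠ 0) :
    ∃ p ∈ σ, phi p = q := by
  by_contra h
  push_neg at h
  apply hq
  apply Finset.sum_eq_zero
  intro p _
  split
  · rename_i hphi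
    by_contra hfp
    exact h p (hsupp p hfp) hphi
  · rfl

lemma push_eq_self {f : VPair (CK v) → ℝ} (h : ∀ p, f p ≠ 0 → phi p = p) :
    push f = f := by
  funext q
  rw [push, Finset.sum_eq_single q]
  · by_cases hq : f q = 0
    · simp [hq]
    · rw [if_pos (h q hq)]
  · intro b _ hbq
    by_cases hb : f b = 0
    · simp [hb]
    · rw [h b hb, if_neg hbq]
  · intro h'
    exact absurd (Finset.mem_univ q) h'

abbrev MC (v : ℕ) := MorseComplex (CK v)

lemma sum_eq_of_supp {f : VPair (CK v) → ℝ} {σ τ : Finset (VPair (CK v))}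
    (hστ : σ ⊆ τ) (hsupp : ∀ p, f p ≠ 0 → p ∈ σ) :
    ∑ p ∈ τ, f p = ∑ p ∈ σ, f p := by
  rw [Finset.sum_subset hστ]
  intro p _ hp
  by_contra h
  exact hp (hsupp p h)

/-- the straight-line combination stays in the realization -/
lemma line_mem {f : VPair (CK v) → ℝ} (hf : f ∈ realization (MC v)) {t : ℝ}
    (h0 : 0 ≤ t) (h1 : t ≤ 1) :
    (fun q => (1 - t) * f q + t * push f q) ∈ realization (MC v) := by
  obtain ⟨σ, hσ, hpos, hsupp, hsum⟩ := hf
  have hSc : ∀ p ∈ σ, ∀ q ∈ σ, p ≠ q → VPair.Compatible p q := (morse_faces_iff.mp hσ).2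
  have hne : σ.Nonempty := (morse_faces_iff.mp hσ).1
  refine ⟨σ ∪ σ.image phi, morse_faces_iff.mpr ⟨hne.mono Finset.subset_union_left,
    union_compat hSc⟩, ?_, ?_, ?_⟩
  · intro q
    have h2 := push_nonneg hpos q
    have h3 := hpos q
    simp only []
    nlinarith
  · intro q hq
    by_cases hfq : f q = 0
    · have hpq : push f q ≠ 0 := by
        intro h
        apply hq
        show (1 - t) * f q + t * push f q = 0
        rw [hfq, h]; ring
      obtain ⟨p, hp, hphip⟩ := push_support hsupp hpq
      exact Finset.mem_union_right _ (Finset.mem_image.mpr ⟨p, hp, hphip⟩)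
    · exact Finset.mem_union_left _ (hsupp q hfq)
  · have e1 : ∑ q ∈ σ ∪ σ.image phi, f q = 1 := by
      rw [sum_eq_of_supp Finset.subset_union_left hsupp, hsum]
    have e2 : ∑ q ∈ σ ∪ σ.image phi, push f q = 1 := by
      have h3 : ∀ q, push f q ≠ 0 → q ∈ σ ∪ σ.image phi := by
        intro q hq
        obtain ⟨p, hp, hphip⟩ := push_support hsupp hq
        exact Finset.mem_union_right _ (Finset.mem_image.mpr ⟨p, hp, hphip⟩)
      have := sum_eq_of_supp (Finset.subset_univ (σ ∪ σ.image phi)) h3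
      rw [← this, push_sum, sum_eq_of_supp (Finset.subset_univ σ) hsupp, hsum]
    rw [Finset.sum_add_distrib, ← Finset.mul_sum, ← Finset.mul_sum, e1, e2]
    ring

lemma push_mem {f : VPair (CK v) → ℝ} (hf : f ∈ realization (MC v)) :
    push f ∈ realization (MC v) := by
  have h := line_mem hf (zero_le_one) (le_refl (1:ℝ))
  have : (fun q => (1 - 1) * f q + 1 * push f q) = push f := by
    funext q; ring
  rwa [this] at h


/-- octahedron vertex set -/
noncomputable def OctF (v : ℕ) : Finset (VPair (CK v)) :=
  (Finset.univ.image (A (v := v))) ∪ (Finset.univ.image (B (v := v)))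

lemma push_oct_support (f : VPair (CK v) → ℝ) {q : VPair (CK v)}
    (hq : push f q ≠ 0) : ∃ j : Fin v, q = A j ∨ q = B j := by
  have := push_support (σ := Finset.univ) (fun p _ => Finset.mem_univ p) hq
  obtain ⟨p, -, hp⟩ := this
  obtain ⟨j, hj⟩ := phi_oct p
  exact ⟨j, by rwa [hp] at hj⟩

lemma push_mem_oct (f : VPair (CK v) → ℝ) {q : VPair (CK v)}
    (hq : push f q ≠ 0) : q ∈ OctF v := by
  obtain ⟨j, hj | hj⟩ := push_oct_support f hq
  · exact Finset.mem_union_left _ (Finset.mem_image.mpr ⟨j, Finset.mem_univ j, hj.symm⟩)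
  · exact Finset.mem_union_right _ (Finset.mem_image.mpr ⟨j, Finset.mem_univ j, hj.symm⟩)

lemma push_not_both {f : VPair (CK v) → ℝ} (hf : f ∈ realization (MC v)) (i : Fin v) :
    push f (A i) = 0 ∨ push f (B i) = 0 := by
  obtain ⟨σ, hσ, hpos, hsupp, hsum⟩ := hf
  have hSc : ∀ p ∈ σ, ∀ q ∈ σ, p ≠ q → VPair.Compatible p q := (morse_faces_iff.mp hσ).2
  by_contra h
  push_neg at h
  obtain ⟨p1, hp1, hphi1⟩ := push_support hsupp h.1
  obtain ⟨p2, hp2, hphi2⟩ := push_support hsupp h.2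
  have hne : phi p1 ≠ phi p2 := by rw [hphi1, hphi2]; exact A_ne_B i i
  have := compat_phi_phi hSc hp1 hp2 hne
  rw [hphi1, hphi2] at this
  exact this.2.2.2 rfl

lemma push_total {f : VPair (CK v) → ℝ} (hf : f ∈ realization (MC v)) :
    ∑ i : Fin v, (push f (A i) + push f (B i)) = 1 := by
  obtain ⟨σ, hσ, hpos, hsupp, hsum⟩ := hf
  have hAinj : Set.InjOn (A (v := v)) (Finset.univ : Finset (Fin v)) := fun a _ b _ h => A_inj h
  have hBinj : Set.InjOn (B (v := v)) (Finset.univ : Finset (Fin v)) := fun a _ b _ h => B_inj h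
  have hdisj : Disjoint (Finset.univ.image (A (v := v))) (Finset.univ.image (B (v := v))) := by
    rw [Finset.disjoint_left]
    intro q hqa hqb
    obtain ⟨i, -, rfl⟩ := Finset.mem_image.mp hqa
    obtain ⟨j, -, hj⟩ := Finset.mem_image.mp hqb
    exact A_ne_B i j hj.symm
  have e0 : ∑ q ∈ OctF v, push f q = ∑ q : VPair (CK v), push f q :=
    (sum_eq_of_supp (Finset.subset_univ _) (fun q hq => push_mem_oct f hq)).symm
  have e1 : ∑ q : VPair (CK v), push f q = 1 := by
    rw [push_sum, sum_eq_of_supp (Finset.subset_univ σ) hsupp, hsum]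
  calc ∑ i : Fin v, (push f (A i) + push f (B i))
      = ∑ i : Fin v, push f (A i) + ∑ i : Fin v, push f (B i) := Finset.sum_add_distrib
    _ = ∑ q ∈ Finset.univ.image (A (v := v)), push f q
        + ∑ q ∈ Finset.univ.image (B (v := v)), push f q := by
          rw [Finset.sum_image hAinj, Finset.sum_image hBinj]
    _ = ∑ q ∈ OctF v, push f q := (Finset.sum_union hdisj).symm
    _ = 1 := by rw [e0, e1]

lemma real_nonneg {f : VPair (CK v) → ℝ} (hf : f ∈ realization (MC v)) :
    ∀ p, 0 ≤ f p := hf.choose_spec.2.1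

lemma sum_abs_one {f : VPair (CK v) → ℝ} (hf : f ∈ realization (MC v)) :
    ∑ i : Fin v, |push f (A i) - push f (B i)| = 1 := by
  rw [← push_total hf]
  apply Finset.sum_congr rfl
  intro i _
  have hA := push_nonneg (real_nonneg hf) (A i)
  have hB := push_nonneg (real_nonneg hf) (B i)
  rcases push_not_both hf i with h | h <;> rw [h]
  · rw [abs_of_nonpos (by linarith)]; ring
  · rw [abs_of_nonneg (by linarith)]; ring

/-! ### The Euclidean part -/

noncomputable def Fe (f : VPair (CK v) → ℝ) : EuclideanSpace ℝ (Fin v) :=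
  (EuclideanSpace.equiv (Fin v) ℝ).symm (fun i => push f (A i) - push f (B i))

lemma Fe_apply (f : VPair (CK v) → ℝ) (i : Fin v) :
    Fe f i = push f (A i) - push f (B i) := rfl

lemma Fe_continuous : Continuous (Fe (v := v)) := by
  refine (EuclideanSpace.equiv (Fin v) ℝ).symm.continuous.comp ?_
  exact continuous_pi fun i =>
    ((continuous_apply (A i)).comp push_continuous).sub
      ((continuous_apply (B i)).comp push_continuous)

lemma coord_continuous (i : Fin v) :
    Continuous (fun y : EuclideanSpace ℝ (Fin v) => y i) :=
  (continuous_apply i).comp (EuclideanSpace.equiv (Fin v) ℝ).continuous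

lemma sum_abs_Fe {f : VPair (CK v) → ℝ} (hf : f ∈ realization (MC v)) :
    ∑ i : Fin v, |Fe f i| = 1 := sum_abs_one hf

lemma Fe_ne_zero {f : VPair (CK v) → ℝ} (hf : f ∈ realization (MC v)) :
    Fe f ≠ 0 := by
  intro h
  have h1 := sum_abs_Fe hf
  have h0 : ∀ i : Fin v, Fe f i = 0 := fun i => by rw [h]; rfl
  rw [Finset.sum_congr rfl (fun i _ => by rw [h0 i, abs_zero])] at h1
  simp at h1

lemma norm_Fe_ne_zero {f : VPair (CK v) → ℝ} (hf : f ∈ realization (MC v)) :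
    ‖Fe f‖ ≠ 0 := norm_ne_zero_iff.mpr (Fe_ne_zero hf)

/-- the map to the sphere -/
noncomputable def rfun (f : ↥(realization (MC v))) :
    ↥(Metric.sphere (0 : EuclideanSpace ℝ (Fin v)) 1) :=
  ⟨‖Fe f.1‖⁻¹ • Fe f.1, by
    rw [mem_sphere_zero_iff_norm]
    exact norm_smul_inv_norm (𝕜 := ℝ) (Fe_ne_zero f.2)⟩

lemma rfun_continuous : Continuous (rfun (v := v)) := by
  apply Continuous.subtype_mk
  have hFe : Continuous fun f : ↥(realization (MC v)) => Fe f.1 :=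
    Fe_continuous.comp continuous_subtype_val
  exact ((hFe.norm.inv₀ (fun f => norm_Fe_ne_zero f.2)).smul hFe)

/-- ℓ¹ norm shortcut -/
noncomputable def ny (y : EuclideanSpace ℝ (Fin v)) : ℝ := ∑ i : Fin v, |y i|

lemma ny_nonneg (y : EuclideanSpace ℝ (Fin v)) : 0 ≤ ny y :=
  Finset.sum_nonneg fun i _ => abs_nonneg _

lemma ny_pos {y : EuclideanSpace ℝ (Fin v)} (hy : y ≠ 0) : 0 < ny y := by
  have : ∃ i, y i ≠ 0 := by
    by_contra h
    push_neg at h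
    exact hy (PiLp.ext h)
  obtain ⟨i, hi⟩ := this
  exact Finset.sum_pos' (fun j _ => abs_nonneg _) ⟨i, Finset.mem_univ i, abs_pos.mpr hi⟩

lemma sphere_ne_zero {y : EuclideanSpace ℝ (Fin v)}
    (hy : y ∈ Metric.sphere (0 : EuclideanSpace ℝ (Fin v)) 1) : y ≠ 0 := by
  intro h
  rw [mem_sphere_zero_iff_norm, h, norm_zero] at hy
  exact one_ne_zero hy.symm

/-- the inverse map: raw formula -/
noncomputable def sraw (y : EuclideanSpace ℝ (Fin v)) (q : VPair (CK v)) : ℝ :=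
  (∑ i : Fin v, ((if q = A i then max (y i) 0 else 0) +
    (if q = B i then max (-(y i)) 0 else 0))) / ny y

lemma sraw_A (y : EuclideanSpace ℝ (Fin v)) (j : Fin v) :
    sraw y (A j) = max (y j) 0 / ny y := by
  unfold sraw
  congr 1
  rw [Finset.sum_add_distrib]
  have e2 : ∑ i : Fin v, (if (A j : VPair (CK v)) = B i then max (-(y i)) 0 else 0) = 0 :=
    Finset.sum_eq_zero fun i _ => if_neg (A_ne_B j i)
  rw [e2, add_zero]
  rw [Finset.sum_eq_single j]
  · exact if_pos rfl
  · intro i _ hij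
    exact if_neg (fun h => hij (A_inj h).symm)
  · intro h
    exact absurd (Finset.mem_univ j) h

lemma sraw_B (y : EuclideanSpace ℝ (Fin v)) (j : Fin v) :
    sraw y (B j) = max (-(y j)) 0 / ny y := by
  unfold sraw
  congr 1
  rw [Finset.sum_add_distrib]
  have e1 : ∑ i : Fin v, (if (B j : VPair (CK v)) = A i then max (y i) 0 else 0) = 0 :=
    Finset.sum_eq_zero fun i _ => if_neg (fun h => A_ne_B i j h.symm)
  rw [e1, zero_add]
  rw [Finset.sum_eq_single j]
  · exact if_pos rfl
  · intro i _ hij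
    exact if_neg (fun h => hij (B_inj h).symm)
  · intro h
    exact absurd (Finset.mem_univ j) h

lemma sraw_other (y : EuclideanSpace ℝ (Fin v)) {q : VPair (CK v)}
    (h : ∀ i : Fin v, q ≠ A i ∧ q ≠ B i) : sraw y q = 0 := by
  unfold sraw
  rw [Finset.sum_eq_zero, zero_div]
  intro i _
  rw [if_neg (h i).1, if_neg (h i).2, add_zero]

lemma oct_compat {i j : Fin v} (hij : i ≠ j) {p q : VPair (CK v)}
    (hp : p = A i ∨ p = B i) (hq : q = A j ∨ q = B j) : p.Compatible q := by
  have hhi : p.hi ≠ q.hi := by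
    rcases hp with rfl | rfl <;> rcases hq with rfl | rfl <;>
      simpa using leaf_ne_leaf hij
  refine compat_of ?_ hhi
  rcases hp with rfl | rfl <;> rcases hq with rfl | rfl <;>
    simp [Finset.singleton_inj, hij]

section WithNeZero

variable [NeZero v]

/-- support face for `sraw` -/
noncomputable def sigY (y : EuclideanSpace ℝ (Fin v)) : Finset (VPair (CK v)) :=
  Finset.univ.image (fun i : Fin v => if 0 ≤ y i then A i else B i)

lemma sigY_mem {y : EuclideanSpace ℝ (Fin v)} {q : VPair (CK v)} (hq : q ∈ sigY y) :
    ∃ i : Fin v, q = A i ∨ q = B i := by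
  obtain ⟨i, -, rfl⟩ := Finset.mem_image.mp hq
  by_cases h : 0 ≤ y i
  · exact ⟨i, Or.inl (if_pos h)⟩
  · exact ⟨i, Or.inr (if_neg h)⟩

lemma sigY_face (y : EuclideanSpace ℝ (Fin v)) : (MC v).faces (sigY y) := by
  haveI : Nonempty (Fin v) := ⟨⟨0, NeZero.pos v⟩⟩
  refine morse_faces_iff.mpr ⟨Finset.image_nonempty.mpr Finset.univ_nonempty, ?_⟩
  intro p hp q hq hne
  obtain ⟨i, -, hpi⟩ := Finset.mem_image.mp hp
  obtain ⟨j, -, hqj⟩ := Finset.mem_image.mp hq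
  have hij : i ≠ j := by
    intro h
    exact hne (by rw [← hpi, ← hqj, h])
  refine oct_compat hij ?_ ?_
  · rw [← hpi]; by_cases h : 0 ≤ y i
    · exact Or.inl (by rw [if_pos h])
    · exact Or.inr (by rw [if_neg h])
  · rw [← hqj]; by_cases h : 0 ≤ y j
    · exact Or.inl (by rw [if_pos h])
    · exact Or.inr (by rw [if_neg h])

lemma sraw_nonneg (y : EuclideanSpace ℝ (Fin v)) (q : VPair (CK v)) : 0 ≤ sraw y q := by
  apply div_nonneg _ (ny_nonneg y)
  apply Finset.sum_nonneg
  intro i _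
  have h1 : (0:ℝ) ≤ if q = A i then max (y i) 0 else 0 := by
    split; exacts [le_max_right _ _, le_refl 0]
  have h2 : (0:ℝ) ≤ if q = B i then max (-(y i)) 0 else 0 := by
    split; exacts [le_max_right _ _, le_refl 0]
  linarith

lemma sraw_supp (y : EuclideanSpace ℝ (Fin v)) (q : VPair (CK v))
    (hq : sraw y q ≠ 0) : q ∈ sigY y := by
  by_contra h
  apply hq
  unfold sraw
  rw [Finset.sum_eq_zero, zero_div]
  intro i _
  have hAi : (if q = A i then max (y i) 0 else 0) = 0 := by
    split
    · rename_i hqa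
      subst hqa
      have : ¬ (0 ≤ y i) := by
        intro h0
        exact h (Finset.mem_image.mpr ⟨i, Finset.mem_univ i, by rw [if_pos h0]⟩)
      rw [max_eq_right (by linarith [lt_of_not_ge this])]
    · rfl
  have hBi : (if q = B i then max (-(y i)) 0 else 0) = 0 := by
    split
    · rename_i hqb
      subst hqb
      by_cases h0 : 0 ≤ y i
      · rw [max_eq_right (by linarith)]
      · exact absurd (Finset.mem_image.mpr ⟨i, Finset.mem_univ i, by rw [if_neg h0]⟩) h
    · rfl
  rw [hAi, hBi, add_zero]

lemma sraw_mem {y : EuclideanSpace ℝ (Fin v)} (hy : y ≠ 0) :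
    sraw y ∈ realization (MC v) := by
  have hnpos := ny_pos hy
  refine ⟨sigY y, sigY_face y, sraw_nonneg y, sraw_supp y, ?_⟩
  have hinj : Set.InjOn (fun i : Fin v => if 0 ≤ y i then A i else B i)
      (Finset.univ : Finset (Fin v)) := by
    intro i _ j _ h
    simp only at h
    split at h <;> split at h
    · exact A_inj h
    · exact absurd h (A_ne_B i j)
    · exact absurd h.symm (A_ne_B j i)
    · exact B_inj h
  rw [sigY, Finset.sum_image hinj]
  have : ∀ i : Fin v, sraw y (if 0 ≤ y i then A i else B i) = |y i| / ny y := by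
    intro i
    by_cases h : 0 ≤ y i
    · rw [if_pos h, sraw_A, max_eq_left h, abs_of_nonneg h]
    · rw [if_neg h, sraw_B, max_eq_left (by linarith [lt_of_not_ge h]),
        abs_of_neg (lt_of_not_ge h)]
  rw [Finset.sum_congr rfl (fun i _ => this i), ← Finset.sum_div]
  exact div_self (ne_of_gt hnpos)

end WithNeZero

lemma max_sub_max_neg (a : ℝ) : max a 0 - max (-a) 0 = a := by
  rcases le_total 0 a with h | h
  · rw [max_eq_left h, max_eq_right (by linarith)]; ring
  · rw [max_eq_right h, max_eq_left (by linarith)]; ring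

lemma mul_max0 {c : ℝ} (hc : 0 ≤ c) (a : ℝ) : max (c * a) 0 = c * max a 0 := by
  rcases le_total 0 a with h | h
  · rw [max_eq_left h, max_eq_left (mul_nonneg hc h)]
  · rw [max_eq_right h, max_eq_right (mul_nonpos_of_nonneg_of_nonpos hc h), mul_zero]

section Maps

variable [NeZero v]

noncomputable def smap (y : ↥(Metric.sphere (0 : EuclideanSpace ℝ (Fin v)) 1)) :
    ↥(realization (MC v)) :=
  ⟨sraw y.1, sraw_mem (sphere_ne_zero y.2)⟩

lemma smap_continuous : Continuous (smap (v := v)) := by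
  apply Continuous.subtype_mk
  apply continuous_pi
  intro q
  unfold sraw
  apply Continuous.div
  · apply continuous_finset_sum
    intro i _
    apply Continuous.add
    · by_cases h : q = A i
      · simp only [if_pos h]
        exact ((coord_continuous i).comp continuous_subtype_val).max continuous_const
      · simp only [if_neg h]
        exact continuous_const
    · by_cases h : q = B i
      · simp only [if_pos h]
        exact (((coord_continuous i).comp continuous_subtype_val).neg).max continuous_const
      · simp only [if_neg h]
        exact continuous_const
  · apply continuous_finset_sum
    intro i _
    exact ((coord_continuous i).comp continuous_subtype_val).abs
  · intro y
    exact ne_of_gt (ny_pos (sphere_ne_zero y.2))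

lemma sraw_fixed {y : EuclideanSpace ℝ (Fin v)} :
    push (sraw y) = sraw y := by
  apply push_eq_self
  intro q hq
  obtain ⟨i, hi | hi⟩ := sigY_mem (sraw_supp y q hq) <;> subst hi <;> simp

/-- `rfun ∘ smap = id` -/
lemma rfun_smap (y : ↥(Metric.sphere (0 : EuclideanSpace ℝ (Fin v)) 1)) :
    rfun (smap y) = y := by
  have hyne := sphere_ne_zero y.2
  have hnpos := ny_pos hyne
  have hFe : Fe (sraw y.1) = (ny y.1)⁻¹ • y.1 := by
    refine PiLp.ext fun i => ?_
    have : Fe (sraw y.1) i = push (sraw y.1) (A i) - push (sraw y.1) (B i) := rfl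
    rw [this, sraw_fixed, sraw_A, sraw_B, div_sub_div_same]
    have : ((ny y.1)⁻¹ • y.1) i = (ny y.1)⁻¹ * y.1 i := rfl
    rw [this, max_sub_max_neg, div_eq_inv_mul]
  apply Subtype.ext
  show ‖Fe (sraw y.1)‖⁻¹ • Fe (sraw y.1) = y.1
  have hnorm : ‖Fe (sraw y.1)‖ = (ny y.1)⁻¹ := by
    rw [hFe, norm_smul, Real.norm_eq_abs, abs_of_pos (inv_pos.mpr hnpos),
      mem_sphere_zero_iff_norm.mp y.2, mul_one]
  rw [hnorm, hFe, inv_inv, smul_smul, mul_inv_cancel₀ (ne_of_gt hnpos), one_smul]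

/-- `smap ∘ rfun = push` -/
lemma smap_rfun (f : ↥(realization (MC v))) :
    (smap (rfun f)).1 = push f.1 := by
  have hz1 : ∑ i : Fin v, |Fe f.1 i| = 1 := sum_abs_Fe f.2
  have hznn : (0:ℝ) < ‖Fe f.1‖ :=
    lt_of_le_of_ne (norm_nonneg _) (Ne.symm (norm_Fe_ne_zero f.2))
  set c : ℝ := ‖Fe f.1‖⁻¹ with hc
  have hcpos : 0 < c := inv_pos.mpr hznn
  have hyc : ∀ i, (rfun f).1 i = c * Fe f.1 i := fun i => rfl
  have hny : ny (rfun f).1 = c := by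
    unfold ny
    rw [Finset.sum_congr rfl (fun i _ => by
      rw [hyc i, abs_mul, abs_of_pos hcpos]), ← Finset.mul_sum, hz1, mul_one]
  show sraw (rfun f).1 = push f.1
  funext q
  have hAval : ∀ j : Fin v, max (Fe f.1 j) 0 = push f.1 (A j) := by
    intro j
    have hAn := push_nonneg (real_nonneg f.2) (A j)
    have hBn := push_nonneg (real_nonneg f.2) (B j)
    rw [Fe_apply]
    rcases push_not_both f.2 j with h | h <;> rw [h]
    · rw [max_eq_right (by linarith)]
    · rw [sub_zero, max_eq_left hAn]
  have hBval : ∀ j : Fin v, max (-(Fe f.1 j)) 0 = push f.1 (B j) := by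
    intro j
    have hAn := push_nonneg (real_nonneg f.2) (A j)
    have hBn := push_nonneg (real_nonneg f.2) (B j)
    rw [Fe_apply, neg_sub]
    rcases push_not_both f.2 j with h | h <;> rw [h]
    · rw [sub_zero, max_eq_left hBn]
    · rw [max_eq_right (by linarith)]
  by_cases hqa : ∃ j : Fin v, q = A j
  · obtain ⟨j, rfl⟩ := hqa
    rw [sraw_A, hny, hyc j, mul_max0 (le_of_lt hcpos),
      mul_div_cancel_left₀ _ (ne_of_gt hcpos), hAval]
  · by_cases hqb : ∃ j : Fin v, q = B j
    · obtain ⟨j, rfl⟩ := hqb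
      rw [sraw_B, hny, hyc j, ← mul_neg, mul_max0 (le_of_lt hcpos),
        mul_div_cancel_left₀ _ (ne_of_gt hcpos), hBval]
    · push_neg at hqa hqb
      rw [sraw_other _ (fun i => ⟨hqa i, hqb i⟩)]
      by_contra h
      obtain ⟨j, hj | hj⟩ := push_oct_support f.1 (Ne.symm h)
      · exact hqa j hj
      · exact hqb j hj

noncomputable def pushC : C(↥(realization (MC v)), ↥(realization (MC v))) :=
  ⟨fun f => ⟨push f.1, push_mem f.2⟩,
    Continuous.subtype_mk (push_continuous.comp continuous_subtype_val) _⟩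

noncomputable def lineH :
    ContinuousMap.Homotopy (ContinuousMap.id ↥(realization (MC v))) (pushC (v := v)) where
  toContinuousMap :=
    ⟨fun p => ⟨fun q => (1 - (p.1 : ℝ)) * p.2.1 q + (p.1 : ℝ) * push p.2.1 q,
        line_mem p.2.2 p.1.2.1 p.1.2.2⟩, by
      apply Continuous.subtype_mk
      apply continuous_pi
      intro q
      have ht : Continuous fun p : ↥unitInterval × ↥(realization (MC v)) => (p.1 : ℝ) :=
        continuous_subtype_val.comp continuous_fst
      have hfq : Continuous fun p : ↥unitInterval × ↥(realization (MC v)) => p.2.1 q :=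
        (continuous_apply q).comp (continuous_subtype_val.comp continuous_snd)
      have hpq : Continuous fun p : ↥unitInterval × ↥(realization (MC v)) => push p.2.1 q :=
        (continuous_apply q).comp
          (push_continuous.comp (continuous_subtype_val.comp continuous_snd))
      exact ((continuous_const.sub ht).mul hfq).add (ht.mul hpq)⟩
  map_zero_left x := by
    apply Subtype.ext
    funext q
    show (1 - ((0 : unitInterval) : ℝ)) * x.1 q + ((0 : unitInterval) : ℝ) * push x.1 q = x.1 q
    norm_num
  map_one_left x := by
    apply Subtype.ext
    funext q
    show (1 - ((1 : unitInterval) : ℝ)) * x.1 q + ((1 : unitInterval) : ℝ) * push x.1 q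
      = push x.1 q
    norm_num

end Maps

end Stmt14

/-- the Morse complex of the centipede graph `𝒞_v` is homotopy
equivalent to `S^{v-1}`. -/
theorem stmt_14 (v : ℕ) (hv : 1 ≤ v) :
    Nonempty (ContinuousMap.HomotopyEquiv
      (realization (MorseComplex (addLeaves (SimpleGraph.pathGraph v))))
      (Metric.sphere (0 : EuclideanSpace ℝ (Fin v)) 1)) := by
  haveI : NeZero v := ⟨by omega⟩
  refine ⟨{ toFun := ⟨Stmt14.rfun (v := v), Stmt14.rfun_continuous (v := v)⟩,
            invFun := ⟨Stmt14.smap (v := v), Stmt14.smap_continuous (v := v)⟩,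
            left_inv := ?_, right_inv := ?_ }⟩
  · have h : (ContinuousMap.mk (Stmt14.smap (v := v)) Stmt14.smap_continuous).comp
        (ContinuousMap.mk (Stmt14.rfun (v := v)) Stmt14.rfun_continuous) = Stmt14.pushC (v := v) := by
      apply ContinuousMap.ext
      intro f
      exact Subtype.ext (Stmt14.smap_rfun f)
    rw [h]
    exact ⟨(Stmt14.lineH (v := v)).symm⟩
  · have h : (ContinuousMap.mk (Stmt14.rfun (v := v)) Stmt14.rfun_continuous).comp
        (ContinuousMap.mk (Stmt14.smap (v := v)) Stmt14.smap_continuous)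
        = ContinuousMap.id _ := by
      apply ContinuousMap.ext
      intro y
      exact Stmt14.rfun_smap y
    rw [h]
end
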